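/- arXiv:2310.19219 — 3 statements merged into one kernel-verified Lean document; each statement's English description precedes it below -/
import Mathlib

section
/- Let f : K → ℝ be centered, ⟨f⟩^s = 0, and suppose there exist a function E : K → ℝ, a function h : K → ℝ, and a subset 𝒟 ⊆ K such that f = LE + h and h(x) = 0 for all x ∉ 𝒟. Then any solution V of LV + f = 0 satisfies, for all x, y ∈ K: |V(x) − V(y)| ≤ |E(x) − E(y)| + ‖h‖ · ∑_{z ∈ 𝒟} ρ^s(z) |τ(x,z) − τ(y,z)|, where ‖h‖ = max_z |h(z)|. -/
open scoped Classical

/-- The backward generator `L` of the Markov jump process with rates `k`: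
`L x y = k x y` for `x ≠ y` and `L x x = -∑_{z ≠ x} k x z`. -/
noncomputable def gen {K : Type*} [Fintype K] [DecidableEq K] (k : K → K → ℝ) :
    Matrix K K ℝ :=
  Matrix.of fun x y => if x = y then -∑ z ∈ Finset.univ.erase x, k x z else k x y

/-- Strong connectivity (irreducibility) of the digraph with an arc `(x,y)` whenever
`k x y > 0`. -/
def StronglyConnected {K : Type*} (k : K → K → ℝ) : Prop :=
  ∀ x y : K, Relation.ReflTransGen (fun a b => 0 < k a b) x y

lemma harmonic_const' {K : Type*} [Fintype K] [DecidableEq K] [Nonempty K]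
    (k : K → K → ℝ) (hk : ∀ x y : K, x ≠ y → 0 ≤ k x y)
    (hirr : StronglyConnected k)
    (u : K → ℝ) (hu : ∀ x, ∑ y, k x y * (u y - u x) = 0) :
    ∀ x y, u x = u y := by
  obtain ⟨x₀, -, hmax⟩ := Finset.exists_max_image Finset.univ u Finset.univ_nonempty
  have key : ∀ y, u y = u x₀ := by
    intro y
    induction hirr x₀ y with
    | refl => rfl
    | tail hb hbc ih =>
      rename_i b c
      have hnonpos : ∀ z ∈ Finset.univ, k b z * (u z - u b) ≤ 0 := by
        intro z _
        rcases eq_or_ne z b with rfl | hz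
        · simp
        · have h1 : 0 ≤ k b z := hk b z hz.symm
          have h2 : u z - u b ≤ 0 := by
            have := hmax z (Finset.mem_univ z)
            rw [ih]; linarith
          exact mul_nonpos_of_nonneg_of_nonpos h1 h2
      have hzero := (Finset.sum_eq_zero_iff_of_nonpos hnonpos).mp (hu b) c (Finset.mem_univ c)
      have : u c - u b = 0 := by
        rcases mul_eq_zero.mp hzero with h | h
        · exact absurd h (ne_of_gt hbc)
        · exact h
      rw [← ih]; linarith
  intro x y; rw [key x, key y]

lemma col_balance {K : Type*} [Fintype K] [DecidableEq K]
    (k : K → K → ℝ) (ρ : K → ℝ)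
    (hρstat : Matrix.vecMul ρ (gen k) = 0) :
    ∀ y, ∑ x, ρ x * k x y = ρ y * ∑ z, k y z := by
  intro y
  have h0 : ∑ x, ρ x * gen k x y = 0 := by
    have := congrFun hρstat y
    simpa [Matrix.vecMul, dotProduct] using this
  rw [← Finset.add_sum_erase _ _ (Finset.mem_univ y)] at h0
  have hgyy : gen k y y = -∑ z ∈ Finset.univ.erase y, k y z := by
    simp [gen]
  have hne : ∀ x ∈ Finset.univ.erase y, ρ x * gen k x y = ρ x * k x y := by
    intro x hx
    have : x ≠ y := Finset.ne_of_mem_erase hx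
    simp [gen, this]
  rw [Finset.sum_congr rfl hne, hgyy] at h0
  have e1 := (Finset.add_sum_erase _ (fun x => ρ x * k x y) (Finset.mem_univ y)).symm
  have e2 := (Finset.add_sum_erase _ (fun z => k y z) (Finset.mem_univ y)).symm
  rw [e1, e2]
  nlinarith [h0]

lemma stat_zero {K : Type*} [Fintype K] [DecidableEq K]
    (k : K → K → ℝ) (ρ : K → ℝ)
    (hρstat : Matrix.vecMul ρ (gen k) = 0) (φ : K → ℝ) :
    ∑ x, ρ x * ∑ y, k x y * (φ y - φ x) = 0 := by
  have key := col_balance k ρ hρstat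
  have expand : ∀ x, ρ x * ∑ y, k x y * (φ y - φ x)
      = (∑ y, ρ x * k x y * φ y) - ρ x * φ x * ∑ y, k x y := by
    intro x
    rw [Finset.mul_sum, Finset.mul_sum, ← Finset.sum_sub_distrib]
    exact Finset.sum_congr rfl fun i _ => by ring
  simp_rw [expand]
  rw [Finset.sum_sub_distrib, Finset.sum_comm]
  have : ∀ y, ∑ x, ρ x * k x y * φ y = ρ y * (∑ z, k y z) * φ y := by
    intro y
    rw [← Finset.sum_mul, key y]
  simp_rw [this]
  apply sub_eq_zero_of_eq
  exact Finset.sum_congr rfl fun y _ => by ring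

/-- Refined bound: if `f = LE + h` with `h` supported in `𝒟`, then any solution `V` of
`LV + f = 0` satisfies
`|V(x) - V(y)| ≤ |E(x) - E(y)| + ‖h‖ ∑_{z ∈ 𝒟} ρˢ(z) |τ(x,z) - τ(y,z)|`. -/
theorem quasipotential_difference_refined_bound
    {K : Type*} [Fintype K] [DecidableEq K] [Nonempty K]
    (k : K → K → ℝ) (hk : ∀ x y : K, x ≠ y → 0 ≤ k x y)
    (hirr : StronglyConnected k)
    (ρ : K → ℝ) (hρpos : ∀ x, 0 < ρ x) (hρsum : ∑ x, ρ x = 1)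
    (hρstat : Matrix.vecMul ρ (gen k) = 0)
    (τ : K → K → ℝ) (hτ0 : ∀ z, τ z z = 0)
    (hτ : ∀ z x, x ≠ z → (∑ y, k x y * (τ y z - τ x z)) + 1 = 0)
    (f : K → ℝ) (hf : ∑ x, f x * ρ x = 0)
    (𝒟 : Finset K) (E h : K → ℝ)
    (hfEh : ∀ x, f x = (∑ y, k x y * (E y - E x)) + h x)
    (hsupp : ∀ x ∉ 𝒟, h x = 0)
    (V : K → ℝ) (hV : ∀ x, (∑ y, k x y * (V y - V x)) + f x = 0) :
    ∀ x y, |V x - V y| ≤ |E x - E y| +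
      (Finset.univ.sup' Finset.univ_nonempty fun z => |h z|) *
        ∑ z ∈ 𝒟, ρ z * |τ x z - τ y z| := by
  -- mean of h is zero
  have hmean : ∑ z, ρ z * h z = 0 := by
    have hE := stat_zero k ρ hρstat E
    have : ∑ x, ρ x * f x = (∑ x, ρ x * ∑ y, k x y * (E y - E x)) + ∑ x, ρ x * h x := by
      rw [← Finset.sum_add_distrib]
      exact Finset.sum_congr rfl fun x _ => by rw [hfEh x]; ring
    have hf' : ∑ x, ρ x * f x = 0 := by
      rw [← hf]; exact Finset.sum_congr rfl fun x _ => by ring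
    rw [hf', hE] at this
    linarith
  -- mean first passage at the base point
  have hAx : ∀ x, ρ x * (∑ y, k x y * (τ y x - τ x x)) = 1 - ρ x := by
    intro x
    have hs := stat_zero k ρ hρstat (fun w => τ w x)
    rw [← Finset.add_sum_erase _ _ (Finset.mem_univ x)] at hs
    have hrest : ∀ w ∈ Finset.univ.erase x,
        ρ w * ∑ y, k w y * (τ y x - τ w x) = -ρ w := by
      intro w hw
      have hwx : w ≠ x := Finset.ne_of_mem_erase hw
      have := hτ x w hwx
      have : ∑ y, k w y * (τ y x - τ w x) = -1 := by linarith
      rw [this]; ring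
    rw [Finset.sum_congr rfl hrest] at hs
    have hρerase : ∑ w ∈ Finset.univ.erase x, ρ w = 1 - ρ x := by
      have := (Finset.add_sum_erase _ ρ (Finset.mem_univ x)).symm
      rw [hρsum] at this
      linarith [this]
    rw [Finset.sum_neg_distrib] at hs
    rw [hρerase] at hs
    linarith
  -- the auxiliary function g
  set g : K → ℝ := fun x => -∑ z, ρ z * h z * τ x z with hgdef
  have hLg : ∀ x, ∑ y, k x y * (g y - g x) = -h x := by
    intro x
    have step1 : ∀ y, k x y * (g y - g x)
        = ∑ z, (-(ρ z * h z)) * (k x y * (τ y z - τ x z)) := by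
      intro y
      simp only [hgdef]
      rw [neg_sub_neg, ← Finset.sum_sub_distrib, Finset.mul_sum]
      exact Finset.sum_congr rfl fun z _ => by ring
    rw [Finset.sum_congr rfl fun y _ => step1 y, Finset.sum_comm]
    have pull : ∀ z, ∑ y, -(ρ z * h z) * (k x y * (τ y z - τ x z))
        = -(ρ z * h z) * ∑ y, k x y * (τ y z - τ x z) :=
      fun z => (Finset.mul_sum _ _ _).symm
    rw [Finset.sum_congr rfl fun z _ => pull z]
    rw [← Finset.add_sum_erase _ _ (Finset.mem_univ x)]
    have hrest : ∀ z ∈ Finset.univ.erase x,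
        -(ρ z * h z) * ∑ y, k x y * (τ y z - τ x z) = ρ z * h z := by
      intro z hz
      have hxz : x ≠ z := (Finset.ne_of_mem_erase hz).symm
      have h1 := hτ z x hxz
      have hS : ∑ y, k x y * (τ y z - τ x z) = -1 := by linarith
      rw [hS]; ring
    rw [Finset.sum_congr rfl hrest]
    have hsum_erase : ∑ z ∈ Finset.univ.erase x, ρ z * h z = -(ρ x * h x) := by
      have h2 := Finset.add_sum_erase Finset.univ (fun z => ρ z * h z) (Finset.mem_univ x)
      rw [hmean] at h2
      linarith
    have hx' : -(ρ x * h x) * ∑ y, k x y * (τ y x - τ x x) = -h x * (1 - ρ x) := by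
      have h3 := hAx x
      calc -(ρ x * h x) * ∑ y, k x y * (τ y x - τ x x)
          = -h x * (ρ x * ∑ y, k x y * (τ y x - τ x x)) := by ring
        _ = -h x * (1 - ρ x) := by rw [h3]
    rw [hsum_erase, hx']
    ring
  -- V + E - g is harmonic
  have hu : ∀ x, ∑ y, k x y * ((V y + E y - g y) - (V x + E x - g x)) = 0 := by
    intro x
    have split : ∑ y, k x y * ((V y + E y - g y) - (V x + E x - g x))
        = ((∑ y, k x y * (V y - V x)) + ∑ y, k x y * (E y - E x))
            - ∑ y, k x y * (g y - g x) := by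
      rw [← Finset.sum_add_distrib, ← Finset.sum_sub_distrib]
      exact Finset.sum_congr rfl fun y _ => by ring
    rw [split, hLg x]
    have h1 := hV x
    have h2 := hfEh x
    linarith
  have hconst := harmonic_const' k hk hirr (fun x => V x + E x - g x) hu
  intro x y
  have hVE : V x - V y = (g x - g y) - (E x - E y) := by
    have := hconst x y
    linarith
  have hgdiff : g x - g y = ∑ z ∈ 𝒟, ρ z * h z * (τ y z - τ x z) := by
    have e : g x - g y = ∑ z, ρ z * h z * (τ y z - τ x z) := by
      simp only [hgdef]
      rw [neg_sub_neg, ← Finset.sum_sub_distrib]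
      exact Finset.sum_congr rfl fun z _ => by ring
    rw [e]
    symm
    apply Finset.sum_subset (Finset.subset_univ 𝒟)
    intro z _ hz
    rw [hsupp z hz]; ring
  set M := Finset.univ.sup' Finset.univ_nonempty fun z => |h z| with hMdef
  have hbound : |g x - g y| ≤ M * ∑ z ∈ 𝒟, ρ z * |τ x z - τ y z| := by
    rw [hgdiff]
    calc |∑ z ∈ 𝒟, ρ z * h z * (τ y z - τ x z)|
        ≤ ∑ z ∈ 𝒟, |ρ z * h z * (τ y z - τ x z)| := Finset.abs_sum_le_sum_abs _ _
      _ ≤ ∑ z ∈ 𝒟, M * (ρ z * |τ x z - τ y z|) := by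
          apply Finset.sum_le_sum
          intro z _
          have habs : |ρ z * h z * (τ y z - τ x z)| = ρ z * |h z| * |τ x z - τ y z| := by
            rw [abs_mul, abs_mul, abs_of_pos (hρpos z), abs_sub_comm]
          rw [habs]
          have hM : |h z| ≤ M := Finset.le_sup' (fun z => |h z|) (Finset.mem_univ z)
          nlinarith [mul_nonneg (sub_nonneg.mpr hM)
            (mul_nonneg (hρpos z).le (abs_nonneg (τ x z - τ y z)))]
      _ = M * ∑ z ∈ 𝒟, ρ z * |τ x z - τ y z| := (Finset.mul_sum _ _ _).symm
  have htri : |V x - V y| ≤ |g x - g y| + |E x - E y| := by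
    rw [hVE]; exact abs_sub _ _
  linarith
end

section
/- (Matrix Forest Theorem, strongly connected case) Let ℒ = −L be the Laplacian matrix of the strongly connected weighted digraph G on n vertices. For every α > 0 the matrix I + αℒ is invertible and ((I + αℒ)^{−1})_{x,y} = (∑_{m=0}^{n−1} α^m w(ℱ^{x→y}_m)) / (∑_{m=0}^{n−1} α^m w(ℱ_m)), where ℱ^{x→y}_m is the set of rooted spanning forests of G with exactly m arcs in which x and y belong to the same tree and that tree is rooted at y, ℱ_m is the set of all rooted spanning forests with exactly m arcs, and w(·) denotes the sum over the set of the products of the arc weights k(u,u'). -/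
open scoped Classical

/-- A spanning rooted forest of the digraph of `k`, encoded functionally: each non-fixed
vertex `z` carries the single outgoing arc `(z, F z)`, every vertex eventually reaches a
fixed point (the root of its tree, toward which all arcs of the tree are directed, so there
are no cycles), and every arc is an arc of the digraph. -/
def IsSpForest {K : Type*} (k : K → K → ℝ) (F : K → K) : Prop :=
  (∀ z, ∃ n : ℕ, F (F^[n] z) = F^[n] z) ∧ ∀ z, F z ≠ z → 0 < k z (F z)

/-- The weight of a forest: the product of the rates `k z (F z)` over its arcs. -/
noncomputable def forestWeight {K : Type*} [Fintype K] [DecidableEq K]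
    (k : K → K → ℝ) (F : K → K) : ℝ :=
  ∏ z ∈ Finset.univ.filter (fun z => F z ≠ z), k z (F z)

/-- A spanning tree rooted at `x`: a spanning forest whose only root is `x`. -/
def IsSpTree {K : Type*} [Fintype K] [DecidableEq K] (k : K → K → ℝ) (F : K → K) (x : K) :
    Prop :=
  IsSpForest k F ∧ Finset.univ.filter (fun z => F z = z) = {x}

/-- `w(x)`: the total weight of all spanning trees rooted at `x`. -/
noncomputable def treeWt {K : Type*} [Fintype K] [DecidableEq K] (k : K → K → ℝ) (x : K) : ℝ :=
  ∑ F ∈ Finset.univ.filter (fun F : K → K => IsSpTree k F x), forestWeight k F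

/-- `W = ∑_x w(x)`: the total weight of all rooted spanning trees. -/
noncomputable def treeWtTotal {K : Type*} [Fintype K] [DecidableEq K] (k : K → K → ℝ) : ℝ :=
  ∑ x, treeWt k x

/-- `w(ℱ^{x→y}_m)`: total weight of spanning rooted forests with exactly `m` arcs in which
`x` and `y` lie in the same tree, rooted at `y`. -/
noncomputable def wForestTo {K : Type*} [Fintype K] [DecidableEq K]
    (k : K → K → ℝ) (m : ℕ) (x y : K) : ℝ :=
  ∑ F ∈ Finset.univ.filter
      (fun F : K → K => IsSpForest k F ∧
        (Finset.univ.filter (fun z => F z ≠ z)).card = m ∧ F y = y ∧ ∃ n : ℕ, F^[n] x = y),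
    forestWeight k F

/-- `w(ℱ_m)`: total weight of all spanning rooted forests with exactly `m` arcs. -/
noncomputable def wForestAll {K : Type*} [Fintype K] [DecidableEq K]
    (k : K → K → ℝ) (m : ℕ) : ℝ :=
  ∑ F ∈ Finset.univ.filter
      (fun F : K → K => IsSpForest k F ∧
        (Finset.univ.filter (fun z => F z ≠ z)).card = m),
    forestWeight k F

/-- The Laplacian matrix `ℒ = D - A` of the weighted digraph: `ℒ x y = -k x y` for `x ≠ y`
and `ℒ x x = ∑_{z ≠ x} k x z`. -/
noncomputable def lap {K : Type*} [Fintype K] [DecidableEq K] (k : K → K → ℝ) :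
    Matrix K K ℝ :=
  Matrix.of fun x y => if x = y then ∑ z ∈ Finset.univ.erase x, k x z else -k x y

namespace MFT

def Reach {K : Type*} (F : K → K) (a b : K) : Prop := ∃ n : ℕ, F^[n] a = b

variable {K : Type*}

theorem reach_self (F : K → K) (a : K) : Reach F a a := ⟨0, rfl⟩

theorem reach_trans {F : K → K} {a b c : K} (h1 : Reach F a b) (h2 : Reach F b c) :
    Reach F a c := by
  obtain ⟨m, rfl⟩ := h1; obtain ⟨n, rfl⟩ := h2
  exact ⟨n + m, Function.iterate_add_apply F n m a⟩

theorem reach_of_fixed {F : K → K} {x y : K} (hx : F x = x) (h : Reach F x y) : x = y := by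
  obtain ⟨n, hn⟩ := h; rwa [Function.iterate_fixed hx] at hn

theorem reach_fixed {F : K → K} {a x y : K} (hy : F y = y) (h1 : Reach F a x)
    (h2 : Reach F a y) : Reach F x y := by
  obtain ⟨m, hm⟩ := h1; obtain ⟨n, hn⟩ := h2
  rcases le_total m n with h | h
  · exact ⟨n - m, by rw [← hm, ← Function.iterate_add_apply, Nat.sub_add_cancel h, hn]⟩
  · have hxy : x = y := by
      rw [← hm, ← Nat.sub_add_cancel h, Function.iterate_add_apply, hn,
        Function.iterate_fixed hy]
    exact ⟨0, hxy⟩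

theorem fx_ne_of_reach {F : K → K} {x y : K} (h : Reach F x y) (hxy : x ≠ y) : F x ≠ x :=
  fun hfx => hxy (reach_of_fixed hfx h)

/-- no nontrivial cycle through a non-fixed point -/
theorem forest_no_cycle {k : K → K → ℝ} {F : K → K} (hF : IsSpForest k F) {x : K}
    {n : ℕ} (hn : 0 < n) (h : F^[n] x = x) : F x = x := by
  obtain ⟨N, hN⟩ := hF.1 x
  obtain ⟨m, rfl⟩ := Nat.exists_eq_succ_of_ne_zero hn.ne'
  have hmul : F^[(m + 1) * N] x = x := by
    rw [Function.iterate_mul]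
    exact Function.iterate_fixed h N
  have hxp : x = F^[N] x := by
    conv_lhs => rw [← hmul]
    rw [Nat.succ_mul, Function.iterate_add_apply]
    exact Function.iterate_fixed hN (m * N)
  calc F x = F (F^[N] x) := by rw [← hxp]
    _ = F^[N] x := hN
    _ = x := hxp.symm

theorem not_reach_fx {k : K → K → ℝ} {F : K → K} (hF : IsSpForest k F) {x : K}
    (hx : F x ≠ x) : ∀ m : ℕ, F^[m] (F x) ≠ x := by
  intro m hm
  exact hx (forest_no_cycle hF (Nat.succ_pos m) (by rwa [Function.iterate_succ_apply]))

theorem iterate_update_eq {F : K → K} [DecidableEq K] {x v : K} (w : K)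
    (h : ∀ m : ℕ, F^[m] v ≠ x) (n : ℕ) : (Function.update F x w)^[n] v = F^[n] v := by
  induction n with
  | zero => rfl
  | succ n ih =>
    rw [Function.iterate_succ_apply', Function.iterate_succ_apply', ih,
      Function.update_of_ne (h n)]

theorem iterate_update_eq' {F : K → K} [DecidableEq K] {x v : K} (w : K)
    (h : ∀ m : ℕ, (Function.update F x w)^[m] v ≠ x) (n : ℕ) :
    (Function.update F x w)^[n] v = F^[n] v := by
  induction n with
  | zero => rfl
  | succ n ih =>
    rw [Function.iterate_succ_apply', Function.update_of_ne (h n), ih]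
    exact (Function.iterate_succ_apply' F n v).symm

theorem remove_forest {k : K → K → ℝ} {F : K → K} [DecidableEq K] (hF : IsSpForest k F)
    (x : K) : IsSpForest k (Function.update F x x) := by
  constructor
  · intro v
    by_cases hx : ∃ m : ℕ, (Function.update F x x)^[m] v = x
    · obtain ⟨m, hm⟩ := hx
      exact ⟨m, by rw [hm]; simp [Function.update_self]⟩
    · push_neg at hx
      obtain ⟨n, hn⟩ := hF.1 v
      refine ⟨n, ?_⟩
      rw [iterate_update_eq' x hx n, Function.update_of_ne ?_, hn]
      rw [← iterate_update_eq' x hx n]; exact hx n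
  · intro z hz
    rcases eq_or_ne z x with rfl | hzx
    · simp [Function.update_self] at hz
    · rw [Function.update_of_ne hzx] at hz ⊢
      exact hF.2 z hz

theorem add_forest {k : K → K → ℝ} {F : K → K} [DecidableEq K] (hF : IsSpForest k F)
    {x z : K} (hx : F x = x) (hz : z ≠ x) (havoid : ∀ m : ℕ, F^[m] z ≠ x)
    (hkz : 0 < k x z) : IsSpForest k (Function.update F x z) := by
  constructor
  · intro v
    by_cases hhit : ∃ m : ℕ, (Function.update F x z)^[m] v = x
    · obtain ⟨m, hm⟩ := hhit
      obtain ⟨n, hn⟩ := hF.1 z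
      refine ⟨m + 1 + n, ?_⟩
      have h1 : (Function.update F x z)^[m + 1] v = z := by
        rw [Function.iterate_succ_apply', hm, Function.update_self]
      have h2 : (Function.update F x z)^[m + 1 + n] v = F^[n] z := by
        rw [add_comm (m+1) n, Function.iterate_add_apply, h1,
          iterate_update_eq z havoid n]
      rw [h2, Function.update_of_ne (havoid n), hn]
    · push_neg at hhit
      obtain ⟨n, hn⟩ := hF.1 v
      refine ⟨n, ?_⟩
      rw [iterate_update_eq' z hhit n, Function.update_of_ne ?_, hn]
      rw [← iterate_update_eq' (x := x) z hhit n]; exact hhit n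
  · intro v hv
    rcases eq_or_ne v x with rfl | hvx
    · rwa [Function.update_self]
    · rw [Function.update_of_ne hvx] at hv ⊢
      exact hF.2 v hv

variable [Fintype K] [DecidableEq K]

noncomputable def wt (k : K → K → ℝ) (α : ℝ) (F : K → K) : ℝ :=
  α ^ (Finset.univ.filter fun z => F z ≠ z).card * forestWeight k F

theorem arcs_update (F : K → K) (x : K) :
    (Finset.univ.filter fun z => Function.update F x x z ≠ z)
      = (Finset.univ.filter fun z => F z ≠ z).erase x := by
  ext z
  rcases eq_or_ne z x with rfl | hzx
  · simp [Function.update_self]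
  · simp [Function.update_of_ne hzx, hzx, Finset.mem_erase]

theorem wt_remove (k : K → K → ℝ) (α : ℝ) {F : K → K} {x : K} (hx : F x ≠ x) :
    wt k α F = α * k x (F x) * wt k α (Function.update F x x) := by
  have hxmem : x ∈ Finset.univ.filter (fun z => F z ≠ z) := by simp [hx]
  unfold wt forestWeight
  rw [arcs_update, Finset.card_erase_of_mem hxmem]
  have hprod : ∏ z ∈ (Finset.univ.filter fun z => F z ≠ z).erase x,
      k z (Function.update F x x z)
      = ∏ z ∈ (Finset.univ.filter fun z => F z ≠ z).erase x, k z (F z) := by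
    refine Finset.prod_congr rfl fun z hz => ?_
    rw [Function.update_of_ne (Finset.mem_erase.1 hz).1]
  rw [hprod, ← Finset.mul_prod_erase _ _ hxmem]
  have hcpos : 0 < (Finset.univ.filter fun z => F z ≠ z).card :=
    Finset.card_pos.2 ⟨x, hxmem⟩
  have hpow : α ^ (Finset.univ.filter fun z => F z ≠ z).card
      = α ^ ((Finset.univ.filter fun z => F z ≠ z).card - 1) * α := by
    rw [← pow_succ, Nat.sub_add_cancel hcpos]
  rw [hpow]; ring

theorem arcs_card_lt {k : K → K → ℝ} {F : K → K} [Nonempty K] (hF : IsSpForest k F) :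
    (Finset.univ.filter fun z => F z ≠ z).card < Fintype.card K := by
  obtain ⟨z⟩ := ‹Nonempty K›
  obtain ⟨n, hn⟩ := hF.1 z
  have h1 : (Finset.univ.filter fun z => F z ≠ z) ⊂ Finset.univ :=
    Finset.filter_ssubset.2 ⟨F^[n] z, Finset.mem_univ _, by simp [hn]⟩
  simpa [Finset.card_univ] using Finset.card_lt_card h1

theorem wt_nonneg {k : K → K → ℝ} {F : K → K} (hF : IsSpForest k F) {α : ℝ} (hα : 0 ≤ α) :
    0 ≤ wt k α F :=
  mul_nonneg (pow_nonneg hα _)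
    (Finset.prod_nonneg fun z hz => (hF.2 z (Finset.mem_filter.1 hz).2).le)

theorem id_forest (k : K → K → ℝ) : IsSpForest k (id : K → K) :=
  ⟨fun z => ⟨0, rfl⟩, fun z hz => absurd rfl hz⟩

theorem wt_id (k : K → K → ℝ) (α : ℝ) : wt k α (id : K → K) = 1 := by
  unfold wt forestWeight; simp

theorem sum_range_wt (k : K → K → ℝ) (α : ℝ) [Nonempty K]
    (s : Finset (K → K)) (t : ℕ → Finset (K → K))
    (hs : ∀ F ∈ s, IsSpForest k F)
    (ht : ∀ (m : ℕ) (F : K → K),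
      F ∈ t m ↔ F ∈ s ∧ (Finset.univ.filter (fun z => F z ≠ z)).card = m) :
    ∑ m ∈ Finset.range (Fintype.card K), α ^ m * ∑ F ∈ t m, forestWeight k F
    = ∑ F ∈ s, wt k α F := by
  have hteq : ∀ m, t m
      = s.filter (fun F => (Finset.univ.filter (fun z => F z ≠ z)).card = m) := by
    intro m; ext F; rw [ht, Finset.mem_filter]
  rw [← Finset.sum_fiberwise_of_maps_to
      (g := fun F : K → K => (Finset.univ.filter (fun z => F z ≠ z)).card)
      (t := Finset.range (Fintype.card K))
      (fun F hF => Finset.mem_range.2 (arcs_card_lt (hs F hF))) (wt k α)]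
  refine Finset.sum_congr rfl fun m _ => ?_
  rw [hteq m, Finset.mul_sum]
  refine Finset.sum_congr rfl fun F hF => ?_
  have hc := (Finset.mem_filter.1 hF).2
  unfold wt
  rw [hc]

theorem update_fixed {G : K → K} {x : K} (h : G x = x) : Function.update G x x = G := by
  funext v
  rcases eq_or_ne v x with rfl | hv
  · rw [Function.update_self, h]
  · rw [Function.update_of_ne hv]

theorem avoid_of_reach_fixed {F : K → K} {x y z : K} (hx : F x = x) (hy : F y = y)
    (hxy : x ≠ y) (h : Reach F z y) : ∀ m : ℕ, F^[m] z ≠ x := by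
  intro m hm
  exact hxy (reach_of_fixed hx (reach_fixed hy ⟨m, hm⟩ h))

/-- Bijection 1: removing the arc at `x` from forests where `x` is not a root. -/
theorem sum_remove_root (k : K → K → ℝ) (α : ℝ) (x : K) :
    ∑ F ∈ Finset.univ.filter (fun F : K → K => IsSpForest k F ∧ F x ≠ x), wt k α F
    = ∑ p ∈ (Finset.univ ×ˢ Finset.univ).filter
        (fun p : K × (K → K) => (p.1 ≠ x ∧ 0 < k x p.1) ∧ IsSpForest k p.2 ∧
          p.2 x = x ∧ ¬ Reach p.2 p.1 x),
      α * k x p.1 * wt k α p.2 := by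
  refine Finset.sum_nbij' (fun F => (F x, Function.update F x x))
    (fun p => Function.update p.2 x p.1) ?_ ?_ ?_ ?_ ?_
  · intro F hF
    simp only [Finset.mem_filter, Finset.mem_univ, true_and] at hF
    obtain ⟨hFor, hx'⟩ := hF
    simp only [Finset.mem_filter, Finset.mem_product, Finset.mem_univ, true_and, and_true]
    refine ⟨⟨hx', hFor.2 x hx'⟩, remove_forest hFor x, Function.update_self x x F, ?_⟩
    rintro ⟨m, hm⟩
    rw [iterate_update_eq x (not_reach_fx hFor hx') m] at hm
    exact not_reach_fx hFor hx' m hm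
  · rintro ⟨z, G⟩ hp
    simp only [Finset.mem_filter, Finset.mem_product, Finset.mem_univ, true_and] at hp
    obtain ⟨⟨hz, hk⟩, hGor, hfix, hnr⟩ := hp
    have havoid : ∀ m : ℕ, G^[m] z ≠ x := fun m hm => hnr ⟨m, hm⟩
    simp only [Finset.mem_filter, Finset.mem_univ, true_and]
    refine ⟨add_forest hGor hfix hz havoid hk, ?_⟩
    rw [Function.update_self]; exact hz
  · intro F _
    simp only [Function.update_idem, Function.update_eq_self]
  · rintro ⟨z, G⟩ hp
    simp only [Finset.mem_filter, Finset.mem_product, Finset.mem_univ, true_and] at hp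
    obtain ⟨⟨hz, hk⟩, hGor, hfix, hnr⟩ := hp
    simp only [Function.update_self, Function.update_idem, Prod.mk.injEq]
    exact ⟨trivial, update_fixed hfix⟩
  · intro F hF
    simp only [Finset.mem_filter, Finset.mem_univ, true_and] at hF
    exact wt_remove k α hF.2

/-- Bijection 2: first-step decomposition of `B x y` for `x ≠ y`. -/
theorem sum_first_step (k : K → K → ℝ) (α : ℝ) {x y : K} (hxy : x ≠ y) :
    ∑ F ∈ Finset.univ.filter (fun F : K → K => IsSpForest k F ∧ F y = y ∧ Reach F x y),
      wt k α F
    = ∑ p ∈ (Finset.univ ×ˢ Finset.univ).filter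
        (fun p : K × (K → K) => (p.1 ≠ x ∧ 0 < k x p.1) ∧ IsSpForest k p.2 ∧
          p.2 x = x ∧ p.2 y = y ∧ Reach p.2 p.1 y),
      α * k x p.1 * wt k α p.2 := by
  refine Finset.sum_nbij' (fun F => (F x, Function.update F x x))
    (fun p => Function.update p.2 x p.1) ?_ ?_ ?_ ?_ ?_
  · intro F hF
    simp only [Finset.mem_filter, Finset.mem_univ, true_and] at hF
    obtain ⟨hFor, hy, hreach⟩ := hF
    have hx' : F x ≠ x := fx_ne_of_reach hreach hxy
    simp only [Finset.mem_filter, Finset.mem_product, Finset.mem_univ, true_and]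
    refine ⟨⟨hx', hFor.2 x hx'⟩, remove_forest hFor x, Function.update_self x x F,
      (by rw [Function.update_of_ne (Ne.symm hxy)]; exact hy), ?_⟩
    obtain ⟨n, hn⟩ := hreach
    have hn0 : n ≠ 0 := by rintro rfl; exact hxy hn
    obtain ⟨m, rfl⟩ := Nat.exists_eq_succ_of_ne_zero hn0
    refine ⟨m, ?_⟩
    rw [iterate_update_eq x (not_reach_fx hFor hx') m]
    rwa [Function.iterate_succ_apply] at hn
  · rintro ⟨z, G⟩ hp
    simp only [Finset.mem_filter, Finset.mem_product, Finset.mem_univ, true_and] at hp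
    obtain ⟨⟨hz, hk⟩, hGor, hGx, hGy, hreach⟩ := hp
    have havoid : ∀ m : ℕ, G^[m] z ≠ x := avoid_of_reach_fixed hGx hGy hxy hreach
    simp only [Finset.mem_filter, Finset.mem_univ, true_and]
    refine ⟨add_forest hGor hGx hz havoid hk,
      (by rw [Function.update_of_ne (Ne.symm hxy)]; exact hGy), ?_⟩
    obtain ⟨n, hn⟩ := hreach
    refine ⟨n + 1, ?_⟩
    rw [Function.iterate_succ_apply, Function.update_self, iterate_update_eq z havoid n]
    exact hn
  · intro F _
    simp only [Function.update_idem, Function.update_eq_self]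
  · rintro ⟨z, G⟩ hp
    simp only [Finset.mem_filter, Finset.mem_product, Finset.mem_univ, true_and] at hp
    obtain ⟨⟨hz, hk⟩, hGor, hGx, hGy, hreach⟩ := hp
    simp only [Function.update_self, Function.update_idem, Prod.mk.injEq]
    exact ⟨trivial, update_fixed hGx⟩
  · intro F hF
    simp only [Finset.mem_filter, Finset.mem_univ, true_and] at hF
    exact wt_remove k α (fx_ne_of_reach hF.2.2 hxy)

/-- Bijection 3: the swap bijection between the "A parts". -/
theorem sum_swap (k : K → K → ℝ) (α : ℝ) {x y : K} (hxy : x ≠ y) :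
    ∑ p ∈ (Finset.univ ×ˢ Finset.univ).filter
        (fun p : K × (K → K) => ((p.1 ≠ x ∧ 0 < k x p.1) ∧ IsSpForest k p.2 ∧
          p.2 y = y ∧ Reach p.2 p.1 y ∧ p.2 x ≠ x) ∧ ¬ Reach p.2 p.1 x),
      k x p.1 * wt k α p.2
    = ∑ p ∈ (Finset.univ ×ˢ Finset.univ).filter
        (fun p : K × (K → K) => ((p.1 ≠ x ∧ 0 < k x p.1) ∧ IsSpForest k p.2 ∧
          p.2 y = y ∧ Reach p.2 x y) ∧ ¬ Reach p.2 p.1 x),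
      k x p.1 * wt k α p.2 := by
  refine Finset.sum_nbij' (fun p => (p.2 x, Function.update p.2 x p.1))
    (fun p => (p.2 x, Function.update p.2 x p.1)) ?_ ?_ ?_ ?_ ?_
  · rintro ⟨z, F⟩ hp
    simp only [Finset.mem_filter, Finset.mem_product, Finset.mem_univ, true_and] at hp
    obtain ⟨⟨⟨hz, hk⟩, hFor, hFy, hry, hFx⟩, hnrx⟩ := hp
    have havoidz : ∀ m : ℕ, F^[m] z ≠ x := fun m hm => hnrx ⟨m, hm⟩
    have havoidz' : ∀ m : ℕ, (Function.update F x x)^[m] z ≠ x := fun m => by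
      rw [iterate_update_eq x havoidz m]; exact havoidz m
    have hGfor : IsSpForest k (Function.update F x z) := by
      rw [← Function.update_idem (a := x) x z F]
      exact add_forest (remove_forest hFor x) (Function.update_self x x F) hz havoidz' hk
    simp only [Finset.mem_filter, Finset.mem_product, Finset.mem_univ, true_and]
    refine ⟨⟨⟨hFx, hFor.2 x hFx⟩, hGfor,
      (by rw [Function.update_of_ne (Ne.symm hxy)]; exact hFy), ?_⟩, ?_⟩
    · obtain ⟨n, hn⟩ := hry
      refine ⟨n + 1, ?_⟩
      rw [Function.iterate_succ_apply, Function.update_self, iterate_update_eq z havoidz n]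
      exact hn
    · rintro ⟨m, hm⟩
      rw [iterate_update_eq z (not_reach_fx hFor hFx) m] at hm
      exact not_reach_fx hFor hFx m hm
  · rintro ⟨w, G⟩ hp
    simp only [Finset.mem_filter, Finset.mem_product, Finset.mem_univ, true_and] at hp
    obtain ⟨⟨⟨hw, hkw⟩, hGor, hGy, hrxy⟩, hnrwx⟩ := hp
    have hGx : G x ≠ x := fx_ne_of_reach hrxy hxy
    have havoidw : ∀ m : ℕ, G^[m] w ≠ x := fun m hm => hnrwx ⟨m, hm⟩
    have havoidw' : ∀ m : ℕ, (Function.update G x x)^[m] w ≠ x := fun m => by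
      rw [iterate_update_eq x havoidw m]; exact havoidw m
    have hFfor : IsSpForest k (Function.update G x w) := by
      rw [← Function.update_idem (a := x) x w G]
      exact add_forest (remove_forest hGor x) (Function.update_self x x G) hw havoidw' hkw
    have havoidGx : ∀ m : ℕ, G^[m] (G x) ≠ x := not_reach_fx hGor hGx
    simp only [Finset.mem_filter, Finset.mem_product, Finset.mem_univ, true_and]
    refine ⟨⟨⟨hGx, hGor.2 x hGx⟩, hFfor,
      (by rw [Function.update_of_ne (Ne.symm hxy)]; exact hGy), ?_, ?_⟩, ?_⟩
    · obtain ⟨n, hn⟩ := hrxy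
      have hn0 : n ≠ 0 := by rintro rfl; exact hxy hn
      obtain ⟨m, rfl⟩ := Nat.exists_eq_succ_of_ne_zero hn0
      refine ⟨m, ?_⟩
      rw [iterate_update_eq w havoidGx m]
      rwa [Function.iterate_succ_apply] at hn
    · rw [Function.update_self]; exact hw
    · rintro ⟨m, hm⟩
      rw [iterate_update_eq w havoidGx m] at hm
      exact havoidGx m hm
  · rintro ⟨z, F⟩ _
    simp only [Function.update_self, Function.update_idem, Function.update_eq_self,
      Prod.mk.injEq]
  · rintro ⟨w, G⟩ _
    simp only [Function.update_self, Function.update_idem, Function.update_eq_self,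
      Prod.mk.injEq]
  · rintro ⟨z, F⟩ hp
    simp only [Finset.mem_filter, Finset.mem_product, Finset.mem_univ, true_and] at hp
    obtain ⟨⟨⟨hz, hk⟩, hFor, hFy, hry, hFx⟩, hnrx⟩ := hp
    have hne : Function.update F x z x ≠ x := by
      rw [Function.update_self]; exact hz
    have e1 := wt_remove k α (F := F) (x := x) hFx
    have e2 := wt_remove k α (F := Function.update F x z) (x := x) hne
    rw [Function.update_idem] at e2
    rw [Function.update_self] at e2
    dsimp only
    rw [e1, e2]
    ring

noncomputable def Bv (k : K → K → ℝ) (α : ℝ) (x y : K) : ℝ :=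
  ∑ F ∈ Finset.univ.filter (fun F : K → K => IsSpForest k F ∧ F y = y ∧ Reach F x y),
    wt k α F

noncomputable def Dv (k : K → K → ℝ) (α : ℝ) : ℝ :=
  ∑ F ∈ Finset.univ.filter (fun F : K → K => IsSpForest k F), wt k α F

theorem key_entry (k : K → K → ℝ) (hk : ∀ x y : K, x ≠ y → 0 ≤ k x y) (α : ℝ) (x y : K) :
    Bv k α x y + α * ((∑ z ∈ Finset.univ.erase x, k x z) * Bv k α x y
      - ∑ z ∈ Finset.univ.erase x, k x z * Bv k α z y)
    = if x = y then Dv k α else 0 := by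
  set zs := Finset.univ.filter (fun z => z ≠ x ∧ 0 < k x z) with hzs_def
  have hsub : zs ⊆ Finset.univ.erase x := by
    intro z hz
    exact Finset.mem_erase.2 ⟨(Finset.mem_filter.1 hz).2.1, Finset.mem_univ _⟩
  have hzero : ∀ z ∈ Finset.univ.erase x, z ∉ zs → k x z = 0 := by
    intro z hz hnz
    have hzx : z ≠ x := (Finset.mem_erase.1 hz).1
    have : ¬ (0 < k x z) := fun h => hnz (Finset.mem_filter.2 ⟨Finset.mem_univ _, hzx, h⟩)
    exact le_antisymm (not_lt.1 this) (hk x z (Ne.symm hzx))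
  have hzs_k : ∑ z ∈ zs, k x z = ∑ z ∈ Finset.univ.erase x, k x z :=
    Finset.sum_subset hsub (fun z hz hnz => hzero z hz hnz)
  have hzs_B : ∑ z ∈ zs, k x z * Bv k α z y
      = ∑ z ∈ Finset.univ.erase x, k x z * Bv k α z y :=
    Finset.sum_subset hsub (fun z hz hnz => by rw [hzero z hz hnz, zero_mul])
  rw [← hzs_k, ← hzs_B]
  rcases eq_or_ne x y with rfl | hxy
  · -- diagonal case
    rw [if_pos rfl]
    have f1 : Dv k α = Bv k α x x
        + ∑ F ∈ Finset.univ.filter (fun F : K → K => IsSpForest k F ∧ F x ≠ x), wt k α F := by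
      rw [Dv, ← Finset.sum_filter_add_sum_filter_not
        (Finset.univ.filter (fun F : K → K => IsSpForest k F)) (fun F => F x = x) (wt k α)]
      congr 1
      · refine Finset.sum_congr ?_ (fun _ _ => rfl)
        rw [Finset.filter_filter]
        refine Finset.filter_congr fun F _ => ?_
        exact ⟨fun ⟨a, b⟩ => ⟨a, b, reach_self F x⟩, fun ⟨a, b, _⟩ => ⟨a, b⟩⟩
      · refine Finset.sum_congr ?_ (fun _ _ => rfl)
        rw [Finset.filter_filter]
    have f2 : ∑ F ∈ Finset.univ.filter (fun F : K → K => IsSpForest k F ∧ F x ≠ x), wt k α F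
        = ∑ z ∈ zs, ∑ F ∈ Finset.univ.filter
            (fun F : K → K => IsSpForest k F ∧ F x = x ∧ ¬ Reach F z x),
            α * k x z * wt k α F := by
      rw [sum_remove_root k α x]
      refine Finset.sum_finset_product' _ _ _
        (fun p => ?_) (f := fun z F => α * k x z * wt k α F)
      simp only [Finset.mem_filter, Finset.mem_product, Finset.mem_univ, true_and, hzs_def]
      try tauto
    have f3 : ∀ z : K, ∑ F ∈ Finset.univ.filter
          (fun F : K → K => IsSpForest k F ∧ F x = x ∧ ¬ Reach F z x), wt k α F
        = Bv k α x x - Bv k α z x := by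
      intro z
      have hsp := Finset.sum_filter_add_sum_filter_not
        (Finset.univ.filter (fun F : K → K => IsSpForest k F ∧ F x = x))
        (fun F => Reach F z x) (wt k α)
      have e1 : (Finset.univ.filter (fun F : K → K => IsSpForest k F ∧ F x = x)).filter
          (fun F => Reach F z x)
          = Finset.univ.filter (fun F : K → K => IsSpForest k F ∧ F x = x ∧ Reach F z x) := by
        rw [Finset.filter_filter]
        exact Finset.filter_congr fun F _ => by tauto
      have e2 : (Finset.univ.filter (fun F : K → K => IsSpForest k F ∧ F x = x)).filter
          (fun F => ¬ Reach F z x)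
          = Finset.univ.filter (fun F : K → K => IsSpForest k F ∧ F x = x ∧ ¬ Reach F z x) := by
        rw [Finset.filter_filter]
        exact Finset.filter_congr fun F _ => by tauto
      have e3 : Finset.univ.filter (fun F : K → K => IsSpForest k F ∧ F x = x)
          = Finset.univ.filter (fun F : K → K => IsSpForest k F ∧ F x = x ∧ Reach F x x) :=
        Finset.filter_congr fun F _ =>
          ⟨fun ⟨a, b⟩ => ⟨a, b, reach_self F x⟩, fun ⟨a, b, _⟩ => ⟨a, b⟩⟩
      rw [e1, e2, e3] at hsp
      have hBzx : Bv k α z x = ∑ F ∈ Finset.univ.filter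
          (fun F : K → K => IsSpForest k F ∧ F x = x ∧ Reach F z x), wt k α F := rfl
      have hBxx : Bv k α x x = ∑ F ∈ Finset.univ.filter
          (fun F : K → K => IsSpForest k F ∧ F x = x ∧ Reach F x x), wt k α F := rfl
      rw [hBzx, hBxx]
      linarith
    have f4 : ∑ F ∈ Finset.univ.filter (fun F : K → K => IsSpForest k F ∧ F x ≠ x), wt k α F
        = α * ((∑ z ∈ zs, k x z) * Bv k α x x - ∑ z ∈ zs, k x z * Bv k α z x) := by
      rw [f2]
      have : ∀ z ∈ zs, ∑ F ∈ Finset.univ.filter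
            (fun F : K → K => IsSpForest k F ∧ F x = x ∧ ¬ Reach F z x),
            α * k x z * wt k α F
          = α * k x z * (Bv k α x x - Bv k α z x) := by
        intro z _
        rw [← Finset.mul_sum, f3 z]
      rw [Finset.sum_congr rfl this, Finset.sum_mul, ← Finset.sum_sub_distrib,
        Finset.mul_sum]
      exact Finset.sum_congr rfl fun z _ => by ring
    linarith [f1, f4]
  · -- off-diagonal case
    rw [if_neg hxy]
    have hB : Bv k α x y = ∑ z ∈ zs, α * k x z * (∑ F ∈ Finset.univ.filter
        (fun F : K → K => IsSpForest k F ∧ F x = x ∧ F y = y ∧ Reach F z y), wt k α F) := by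
      rw [Bv, sum_first_step k α hxy]
      have := Finset.sum_finset_product'
        ((Finset.univ ×ˢ Finset.univ).filter
          (fun p : K × (K → K) => (p.1 ≠ x ∧ 0 < k x p.1) ∧ IsSpForest k p.2 ∧
            p.2 x = x ∧ p.2 y = y ∧ Reach p.2 p.1 y))
        zs
        (fun z => Finset.univ.filter
          (fun F : K → K => IsSpForest k F ∧ F x = x ∧ F y = y ∧ Reach F z y))
        (fun p => by
          simp only [Finset.mem_filter, Finset.mem_product, Finset.mem_univ, true_and, hzs_def]
          try tauto)
        (f := fun z F => α * k x z * wt k α F)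
      rw [this]
      exact Finset.sum_congr rfl fun z _ => by rw [← Finset.mul_sum]
      -- note: RHS already in form ∑ z, α*k*(∑ wt); adjust below if needed
    have hsplit : ∀ z : K, Bv k α z y
        = (∑ F ∈ Finset.univ.filter
            (fun F : K → K => IsSpForest k F ∧ F x = x ∧ F y = y ∧ Reach F z y), wt k α F)
        + (∑ F ∈ Finset.univ.filter
            (fun F : K → K => IsSpForest k F ∧ F y = y ∧ Reach F z y ∧ F x ≠ x), wt k α F) := by
      intro z
      have hsp := Finset.sum_filter_add_sum_filter_not
        (Finset.univ.filter (fun F : K → K => IsSpForest k F ∧ F y = y ∧ Reach F z y))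
        (fun F => F x = x) (wt k α)
      have e1 : (Finset.univ.filter (fun F : K → K => IsSpForest k F ∧ F y = y ∧ Reach F z y)).filter
          (fun F => F x = x)
          = Finset.univ.filter
            (fun F : K → K => IsSpForest k F ∧ F x = x ∧ F y = y ∧ Reach F z y) := by
        rw [Finset.filter_filter]
        exact Finset.filter_congr fun F _ => by tauto
      have e2 : (Finset.univ.filter (fun F : K → K => IsSpForest k F ∧ F y = y ∧ Reach F z y)).filter
          (fun F => ¬ F x = x)
          = Finset.univ.filter
            (fun F : K → K => IsSpForest k F ∧ F y = y ∧ Reach F z y ∧ F x ≠ x) := by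
        rw [Finset.filter_filter]
        exact Finset.filter_congr fun F _ => by tauto
      rw [e1, e2] at hsp
      rw [Bv]
      linarith
    have hPQ : ∑ z ∈ zs, k x z * (∑ F ∈ Finset.univ.filter
          (fun F : K → K => IsSpForest k F ∧ F y = y ∧ Reach F z y ∧ F x ≠ x), wt k α F)
        = (∑ z ∈ zs, k x z) * Bv k α x y := by
      have hP : ∑ z ∈ zs, k x z * (∑ F ∈ Finset.univ.filter
            (fun F : K → K => IsSpForest k F ∧ F y = y ∧ Reach F z y ∧ F x ≠ x), wt k α F)
          = ∑ p ∈ (Finset.univ ×ˢ Finset.univ).filter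
              (fun p : K × (K → K) => (p.1 ≠ x ∧ 0 < k x p.1) ∧ IsSpForest k p.2 ∧
                p.2 y = y ∧ Reach p.2 p.1 y ∧ p.2 x ≠ x),
              k x p.1 * wt k α p.2 := by
        rw [Finset.sum_finset_product'
          ((Finset.univ ×ˢ Finset.univ).filter
            (fun p : K × (K → K) => (p.1 ≠ x ∧ 0 < k x p.1) ∧ IsSpForest k p.2 ∧
              p.2 y = y ∧ Reach p.2 p.1 y ∧ p.2 x ≠ x))
          zs
          (fun z => Finset.univ.filter
            (fun F : K → K => IsSpForest k F ∧ F y = y ∧ Reach F z y ∧ F x ≠ x))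
          (fun p => by
            simp only [Finset.mem_filter, Finset.mem_product, Finset.mem_univ, true_and, hzs_def]
            try tauto)
          (f := fun z F => k x z * wt k α F)]
        exact Finset.sum_congr rfl fun z _ => by rw [← Finset.mul_sum]
      have hQ : ∑ p ∈ (Finset.univ ×ˢ Finset.univ).filter
            (fun p : K × (K → K) => (p.1 ≠ x ∧ 0 < k x p.1) ∧ IsSpForest k p.2 ∧
              p.2 y = y ∧ Reach p.2 x y),
            k x p.1 * wt k α p.2
          = (∑ z ∈ zs, k x z) * Bv k α x y := by
        rw [Finset.sum_finset_product'
          ((Finset.univ ×ˢ Finset.univ).filter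
            (fun p : K × (K → K) => (p.1 ≠ x ∧ 0 < k x p.1) ∧ IsSpForest k p.2 ∧
              p.2 y = y ∧ Reach p.2 x y))
          zs
          (fun _ => Finset.univ.filter
            (fun F : K → K => IsSpForest k F ∧ F y = y ∧ Reach F x y))
          (fun p => by
            simp only [Finset.mem_filter, Finset.mem_product, Finset.mem_univ, true_and, hzs_def]
            try tauto)
          (f := fun z F => k x z * wt k α F)]
        rw [Finset.sum_mul]
        exact Finset.sum_congr rfl fun z _ => by rw [← Finset.mul_sum]; rfl
      have hmid : ∑ p ∈ (Finset.univ ×ˢ Finset.univ).filter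
            (fun p : K × (K → K) => (p.1 ≠ x ∧ 0 < k x p.1) ∧ IsSpForest k p.2 ∧
              p.2 y = y ∧ Reach p.2 p.1 y ∧ p.2 x ≠ x),
            k x p.1 * wt k α p.2
          = ∑ p ∈ (Finset.univ ×ˢ Finset.univ).filter
            (fun p : K × (K → K) => (p.1 ≠ x ∧ 0 < k x p.1) ∧ IsSpForest k p.2 ∧
              p.2 y = y ∧ Reach p.2 x y),
            k x p.1 * wt k α p.2 := by
        rw [← Finset.sum_filter_add_sum_filter_not
          ((Finset.univ ×ˢ Finset.univ).filter
            (fun p : K × (K → K) => (p.1 ≠ x ∧ 0 < k x p.1) ∧ IsSpForest k p.2 ∧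
              p.2 y = y ∧ Reach p.2 p.1 y ∧ p.2 x ≠ x))
          (fun p => Reach p.2 p.1 x) (fun p => k x p.1 * wt k α p.2),
          ← Finset.sum_filter_add_sum_filter_not
          ((Finset.univ ×ˢ Finset.univ).filter
            (fun p : K × (K → K) => (p.1 ≠ x ∧ 0 < k x p.1) ∧ IsSpForest k p.2 ∧
              p.2 y = y ∧ Reach p.2 x y))
          (fun p => Reach p.2 p.1 x) (fun p => k x p.1 * wt k α p.2)]
        congr 1
        · -- the "B parts" are equal as sets
          refine Finset.sum_congr ?_ (fun _ _ => rfl)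
          rw [Finset.filter_filter, Finset.filter_filter]
          refine Finset.filter_congr fun p _ => ?_
          constructor
          · rintro ⟨⟨h1, h2, h3, h4, h5⟩, h6⟩
            exact ⟨⟨h1, h2, h3, reach_fixed h3 h6 h4⟩, h6⟩
          · rintro ⟨⟨h1, h2, h3, h4⟩, h6⟩
            exact ⟨⟨h1, h2, h3, reach_trans h6 h4, fx_ne_of_reach h4 hxy⟩, h6⟩
        · -- the "A parts": swap bijection
          rw [Finset.filter_filter, Finset.filter_filter]
          exact sum_swap k α hxy
      rw [hP, hmid, hQ]
    -- final assembly
    have e1 : α * (∑ z ∈ zs, k x z * (∑ F ∈ Finset.univ.filter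
          (fun F : K → K => IsSpForest k F ∧ F x = x ∧ F y = y ∧ Reach F z y), wt k α F))
        = Bv k α x y := by
      rw [hB, Finset.mul_sum]
      exact Finset.sum_congr rfl fun z _ => by ring
    have e2 : ∑ z ∈ zs, k x z * Bv k α z y
        = (∑ z ∈ zs, k x z * (∑ F ∈ Finset.univ.filter
            (fun F : K → K => IsSpForest k F ∧ F x = x ∧ F y = y ∧ Reach F z y), wt k α F))
        + ∑ z ∈ zs, k x z * (∑ F ∈ Finset.univ.filter
            (fun F : K → K => IsSpForest k F ∧ F y = y ∧ Reach F z y ∧ F x ≠ x), wt k α F) := by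
      rw [← Finset.sum_add_distrib]
      refine Finset.sum_congr rfl fun z _ => ?_
      rw [hsplit z]
      ring
    linear_combination -e1 - α * e2 - α * hPQ

theorem key_matrix (k : K → K → ℝ) (hk : ∀ x y : K, x ≠ y → 0 ≤ k x y) (α : ℝ) :
    (1 + α • lap k) * Matrix.of (fun x y : K => Bv k α x y)
      = Dv k α • (1 : Matrix K K ℝ) := by
  ext x y
  rw [Matrix.mul_apply]
  have hsplit := Finset.add_sum_erase Finset.univ
    (fun z => (1 + α • lap k) x z * Matrix.of (fun x y : K => Bv k α x y) z y)
    (Finset.mem_univ x)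
  rw [← hsplit]
  have hxx : (1 + α • lap k) x x = 1 + α * ∑ u ∈ Finset.univ.erase x, k x u := by
    simp [Matrix.add_apply, Matrix.one_apply, Matrix.smul_apply, lap]
  have hxz : ∀ z ∈ Finset.univ.erase x, (1 + α • lap k) x z * Matrix.of
      (fun x y : K => Bv k α x y) z y = -(α * (k x z * Bv k α z y)) := by
    intro z hz
    have hzx : x ≠ z := fun h => (Finset.mem_erase.1 hz).1 h.symm
    simp [Matrix.add_apply, Matrix.one_apply, Matrix.smul_apply, lap, hzx]
    ring
  rw [Finset.sum_congr rfl hxz, Finset.sum_neg_distrib]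
  rw [hxx, ← Finset.mul_sum]
  have hkey := key_entry k hk α x y
  have hone : (Dv k α • (1 : Matrix K K ℝ)) x y = if x = y then Dv k α else 0 := by
    simp [Matrix.smul_apply, Matrix.one_apply, mul_ite]
  rw [hone, Matrix.of_apply]
  linear_combination hkey

theorem Dv_pos (k : K → K → ℝ) {α : ℝ} (hα : 0 < α) : 0 < Dv k α := by
  have hid : (id : K → K) ∈ Finset.univ.filter (fun F : K → K => IsSpForest k F) :=
    Finset.mem_filter.2 ⟨Finset.mem_univ _, id_forest k⟩
  calc (0 : ℝ) < 1 := one_pos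
    _ = wt k α id := (wt_id k α).symm
    _ ≤ Dv k α := Finset.single_le_sum
        (fun F hF => wt_nonneg (Finset.mem_filter.1 hF).2 hα.le) hid

end MFT

/-- Matrix Forest Theorem (strongly connected case): for every `α > 0` the matrix `I + αℒ`
is invertible and
`((I + αℒ)⁻¹)_{x,y} = (∑_{m<n} αᵐ w(ℱ^{x→y}_m)) / (∑_{m<n} αᵐ w(ℱ_m))`. -/
theorem matrix_forest_theorem
    {K : Type*} [Fintype K] [DecidableEq K] (hcard : 2 ≤ Fintype.card K)
    (k : K → K → ℝ) (hk : ∀ x y : K, x ≠ y → 0 ≤ k x y)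
    (hirr : StronglyConnected k) :
    ∀ α : ℝ, 0 < α →
      IsUnit (1 + α • lap k) ∧
      ∀ x y : K, (1 + α • lap k)⁻¹ x y =
        (∑ m ∈ Finset.range (Fintype.card K), α ^ m * wForestTo k m x y) /
        (∑ m ∈ Finset.range (Fintype.card K), α ^ m * wForestAll k m) := by
  intro α hα
  haveI : Nonempty K := Fintype.card_pos_iff.mp (by omega)
  have hD := MFT.Dv_pos k hα
  have hMB : (1 + α • lap k) *
      ((MFT.Dv k α)⁻¹ • Matrix.of (fun x y : K => MFT.Bv k α x y)) = 1 := by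
    rw [Matrix.mul_smul, MFT.key_matrix k hk α, smul_smul, inv_mul_cancel₀ hD.ne',
      one_smul]
  refine ⟨(Matrix.isUnit_iff_isUnit_det _).2 (Matrix.isUnit_det_of_right_inverse hMB), fun x y => ?_⟩
  rw [Matrix.inv_eq_right_inv hMB]
  have hnum : ∑ m ∈ Finset.range (Fintype.card K), α ^ m * wForestTo k m x y
      = MFT.Bv k α x y := by
    unfold MFT.Bv wForestTo
    refine MFT.sum_range_wt k α _ _ (fun F hF => (Finset.mem_filter.1 hF).2.1) ?_
    intro m F
    simp only [Finset.mem_filter, Finset.mem_univ, true_and]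
    constructor
    · rintro ⟨a, b, c, d⟩; exact ⟨⟨a, c, d⟩, b⟩
    · rintro ⟨⟨a, c, d⟩, b⟩; exact ⟨a, b, c, d⟩
  have hden : ∑ m ∈ Finset.range (Fintype.card K), α ^ m * wForestAll k m
      = MFT.Dv k α := by
    unfold MFT.Dv wForestAll
    refine MFT.sum_range_wt k α _ _ (fun F hF => (Finset.mem_filter.1 hF).2) ?_
    intro m F
    simp only [Finset.mem_filter, Finset.mem_univ, true_and]
  rw [hnum, hden, Matrix.smul_apply, Matrix.of_apply, smul_eq_mul, inv_mul_eq_div]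
end

section
/- (Graphical representation of the group inverse) Let L be the backward generator of an irreducible Markov jump process on n states and let L^# be its group inverse, i.e. the unique matrix X with LXL = L, XLX = X and LX = XL. Then for all x, y ∈ K: L^#_{x,y} = −w(ℱ^{x→y})/W + ρ^s(y) · w(ℱ)/W, where w(ℱ^{x→y}) is the total weight of rooted spanning two-tree forests in which x and y lie in the same tree rooted at y, w(ℱ) is the total weight of all rooted spanning two-tree forests, and W is the total weight of all rooted spanning trees. -/
open scoped Classical

/-- A rooted spanning two-tree forest: a spanning forest with exactly two roots. -/
def IsTwoForest {K : Type*} [Fintype K] [DecidableEq K] (k : K → K → ℝ) (F : K → K) : Prop :=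
  IsSpForest k F ∧ (Finset.univ.filter (fun z => F z = z)).card = 2

/-- `w(x → y)`: the total weight of all rooted spanning two-tree forests in which `x` and `y`
lie in the same tree, that tree being rooted at `y`. -/
noncomputable def wTo {K : Type*} [Fintype K] [DecidableEq K] (k : K → K → ℝ) (x y : K) : ℝ :=
  ∑ F ∈ Finset.univ.filter
      (fun F : K → K => IsTwoForest k F ∧ F y = y ∧ ∃ n : ℕ, F^[n] x = y),
    forestWeight k F

/-- `w(x, z)`: the total weight of all rooted spanning two-tree forests in which `x` and `z`
lie in different trees and the tree containing `z` is rooted at `z`. -/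
noncomputable def wSep {K : Type*} [Fintype K] [DecidableEq K] (k : K → K → ℝ) (x z : K) : ℝ :=
  ∑ F ∈ Finset.univ.filter
      (fun F : K → K => IsTwoForest k F ∧ F z = z ∧ ¬∃ n : ℕ, F^[n] x = z),
    forestWeight k F

/-- `W₂`: the total weight of all rooted spanning two-tree forests. -/
noncomputable def wTwoTotal {K : Type*} [Fintype K] [DecidableEq K] (k : K → K → ℝ) : ℝ :=
  ∑ F ∈ Finset.univ.filter (fun F : K → K => IsTwoForest k F), forestWeight k F

namespace ForestAux

open Finset Function


variable {K : Type*}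

/-- `a` reaches `b` under iteration of `F`. -/
def Reaches (F : K → K) (a b : K) : Prop := ∃ n : ℕ, F^[n] a = b

theorem reaches_rfl (F : K → K) (a : K) : Reaches F a a := ⟨0, rfl⟩

theorem Reaches.trans {F : K → K} {a b c : K} (h1 : Reaches F a b) (h2 : Reaches F b c) :
    Reaches F a c := by
  obtain ⟨m, rfl⟩ := h1; obtain ⟨n, rfl⟩ := h2
  exact ⟨n + m, Function.iterate_add_apply F n m a⟩

theorem reaches_step {F : K → K} {a b : K} (h : Reaches F a b) (hab : a ≠ b) :
    Reaches F (F a) b := by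
  obtain ⟨n, hn⟩ := h
  cases n with
  | zero => exact absurd hn hab
  | succ n => exact ⟨n, by rwa [Function.iterate_succ_apply] at hn⟩

theorem reaches_one (F : K → K) (a : K) : Reaches F a (F a) := ⟨1, rfl⟩

theorem reaches_fixed_eq {F : K → K} {b c : K} (hb : F b = b) (h : Reaches F b c) : c = b := by
  obtain ⟨n, rfl⟩ := h; exact Function.iterate_fixed hb n

theorem reaches_total {F : K → K} {a b c : K} (h1 : Reaches F a b) (h2 : Reaches F a c) :
    Reaches F b c ∨ Reaches F c b := by
  obtain ⟨m, rfl⟩ := h1; obtain ⟨n, rfl⟩ := h2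
  rcases le_total m n with h | h
  · exact Or.inl ⟨n - m, by rw [← Function.iterate_add_apply, Nat.sub_add_cancel h]⟩
  · exact Or.inr ⟨m - n, by rw [← Function.iterate_add_apply, Nat.sub_add_cancel h]⟩

theorem root_eq {F : K → K} {a b c : K} (h1 : Reaches F a b) (hb : F b = b)
    (h2 : Reaches F a c) (hc : F c = c) : b = c := by
  rcases reaches_total h1 h2 with h | h
  · exact (reaches_fixed_eq hb h).symm
  · exact reaches_fixed_eq hc h

theorem exists_min_hit {F : K → K} {a b : K} (h : Reaches F a b) :
    ∃ n : ℕ, F^[n] a = b ∧ ∀ m, m < n → F^[m] a ≠ b :=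
  ⟨Nat.find h, Nat.find_spec h, fun m hm => Nat.find_min h hm⟩

theorem iterate_agree {F G : K → K} {v : K} {n : ℕ}
    (h : ∀ m, m < n → G (F^[m] v) = F (F^[m] v)) : G^[n] v = F^[n] v := by
  induction n generalizing v with
  | zero => rfl
  | succ n ih =>
    have h0 : G v = F v := h 0 (Nat.succ_pos n)
    rw [Function.iterate_succ_apply, Function.iterate_succ_apply, h0]
    exact ih fun m hm => by
      rw [← Function.iterate_succ_apply]
      exact h (m + 1) (Nat.succ_lt_succ hm)

section Update
variable [DecidableEq K] {F : K → K} {x c : K}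

theorem iterate_update_eq {v : K} {n : ℕ} (h : ∀ m, m < n → F^[m] v ≠ x) :
    (update F x c)^[n] v = F^[n] v :=
  iterate_agree fun m hm => update_of_ne (h m hm) c F

theorem reaches_update_of_forall {a b : K} (h : Reaches F a b) (hx : ∀ m, F^[m] a ≠ x) :
    Reaches (update F x c) a b := by
  obtain ⟨n, hn⟩ := h
  exact ⟨n, by rw [iterate_update_eq fun m _ => hx m]; exact hn⟩

theorem not_reaches_of_forall {a : K} (hx : ∀ m : ℕ, F^[m] a ≠ x) : ¬ Reaches F a x :=
  fun ⟨m, hm⟩ => hx m hm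

theorem forall_of_not_reaches {a : K} (hx : ¬ Reaches F a x) : ∀ m : ℕ, F^[m] a ≠ x :=
  fun m hm => hx ⟨m, hm⟩

theorem reaches_update_iff_of_not {a b : K} (hx : ¬ Reaches F a x) :
    Reaches (update F x c) a b ↔ Reaches F a b := by
  constructor
  · rintro ⟨n, hn⟩
    exact ⟨n, by rwa [iterate_update_eq fun m _ => forall_of_not_reaches hx m] at hn⟩
  · intro h; exact reaches_update_of_forall h (forall_of_not_reaches hx)

theorem reaches_update_of_not {a b : K} (h : Reaches F a b) (hx : ¬ Reaches F a x) :
    Reaches (update F x c) a b :=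
  (reaches_update_iff_of_not hx).2 h

theorem not_reaches_update_of_not {a b : K} (h : ¬ Reaches F a b) (hx : ¬ Reaches F a x) :
    ¬ Reaches (update F x c) a b :=
  fun hr => h ((reaches_update_iff_of_not hx).1 hr)

theorem reaches_update_hit {a : K} (h : Reaches F a x) : Reaches (update F x c) a x := by
  obtain ⟨n, hn, hmin⟩ := exists_min_hit h
  exact ⟨n, by rw [iterate_update_eq hmin]; exact hn⟩

/-- if `b ≠ x` then cutting at `x` cannot create new reachability to `b`. -/
theorem not_reaches_update_self {a b : K} (h : ¬ Reaches F a b) (hbx : b ≠ x) :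
    ¬ Reaches (update F x x) a b := by
  rintro ⟨n, hn⟩
  by_cases hx : ∀ m, m < n → (update F x x)^[m] a ≠ x
  · -- then iterates agree
    have heq : F^[n] a = (update F x x)^[n] a :=
      iterate_agree fun m hm => (update_of_ne (hx m hm) x F).symm
    exact h ⟨n, by rw [heq]; exact hn⟩
  · push_neg at hx
    obtain ⟨m, hmn, hmx⟩ := hx
    have hfix : (update F x x) x = x := Function.update_self x x F
    have : (update F x x)^[n] a = x := by
      have : (update F x x)^[n - m] ((update F x x)^[m] a) = x := by
        rw [hmx]; exact Function.iterate_fixed hfix _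
      rwa [← Function.iterate_add_apply, Nat.sub_add_cancel hmn.le] at this
    exact hbx (hn ▸ this)

end Update

/-- every point eventually settles at a fixed point -/
def Settles (F : K → K) : Prop := ∀ v, ∃ n : ℕ, F (F^[n] v) = F^[n] v

theorem Settles.exists_root {F : K → K} (hF : Settles F) (v : K) :
    ∃ r, F r = r ∧ Reaches F v r := by
  obtain ⟨n, hn⟩ := hF v
  exact ⟨F^[n] v, hn, ⟨n, rfl⟩⟩

theorem settles_of_roots {F : K → K} (h : ∀ v, ∃ r, F r = r ∧ Reaches F v r) : Settles F := by
  intro v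
  obtain ⟨r, hr, n, hn⟩ := h v
  exact ⟨n, by rw [hn]; exact hr⟩

theorem cycle_fix {F : K → K} (hF : Settles F) {a : K} (h : Reaches F (F a) a) : F a = a := by
  obtain ⟨n, hn⟩ := h
  have hper : F^[n + 1] a = a := by rwa [Function.iterate_succ_apply]
  obtain ⟨r, hr, m, hm⟩ := hF.exists_root a
  -- a = F^[(n+1)*m] a  since (n+1)*m ≥ m it equals r... careful with m = 0
  have h1 : ∀ t : ℕ, F^[(n + 1) * t] a = a := by
    intro t
    rw [Function.iterate_mul]
    exact Function.iterate_fixed hper t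
  have h2 : (n + 1) * m ≥ m := Nat.le_mul_of_pos_left m (Nat.succ_pos n)
  have h3 : F^[(n + 1) * m] a = r := by
    have := Function.iterate_fixed hr ((n + 1) * m - m)
    rw [← hm, ← Function.iterate_add_apply, Nat.sub_add_cancel h2] at this
    rw [this, hm]
  have : a = r := by rw [← h1 m, h3]
  rw [this, hr]

theorem not_reaches_succ {F : K → K} (hF : Settles F) {a : K} (ha : F a ≠ a) :
    ¬ Reaches F (F a) a := fun h => ha (cycle_fix hF h)

/-- the predecessor of `b` on the path from `a`: uniqueness. -/
theorem pred_unique {F : K → K} {a b u v : K} (hfb : F b = b)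
    (h1 : Reaches F a u) (hu : F u = b) (hub : u ≠ b)
    (h2 : Reaches F a v) (hv : F v = b) (hvb : v ≠ b) : u = v := by
  obtain ⟨i, hi⟩ := h1; obtain ⟨j, hj⟩ := h2
  have key : ∀ p q : ℕ, p + 1 ≤ q → F^[p + 1] a = b → F^[q] a ≠ b → False := by
    intro p q hpq hp hq
    apply hq
    rw [show q = (q - (p + 1)) + (p + 1) from (Nat.sub_add_cancel hpq).symm,
      Function.iterate_add_apply, hp]
    exact Function.iterate_fixed hfb _
  have hib : F^[i + 1] a = b := by rw [Function.iterate_succ_apply', hi, hu]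
  have hjb : F^[j + 1] a = b := by rw [Function.iterate_succ_apply', hj, hv]
  have hij : i = j := by
    rcases lt_trichotomy i j with h | h | h
    · exact (key i j h hib (by rw [hj]; exact hvb)).elim
    · exact h
    · exact (key j i h hjb (by rw [hi]; exact hub)).elim
  rw [← hi, ← hj, hij]


section Settle
variable [DecidableEq K] {F : K → K} {x c : K}

theorem periodic_fix (hF : Settles F) {a : K} {p : ℕ} (hp : 0 < p) (h : F^[p] a = a) :
    F a = a := by
  apply cycle_fix hF
  refine ⟨p - 1, ?_⟩
  have h' : F^[(p - 1) + 1] a = a := by rw [Nat.sub_add_cancel hp]; exact h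
  rw [Function.iterate_succ_apply] at h'
  exact h' 

theorem settles_update (hF : Settles F) (hc : ¬ Reaches F c x) :
    Settles (Function.update F x c) := by
  apply settles_of_roots; intro v
  by_cases hv : Reaches F v x
  · obtain ⟨r, hr, hcr⟩ := hF.exists_root c
    have hrx : r ≠ x := fun h => hc (h ▸ hcr)
    have h1 : Reaches (update F x c) v x := reaches_update_hit hv
    have h2 : Reaches (update F x c) x c := ⟨1, by simp⟩
    have h3 : Reaches (update F x c) c r := reaches_update_of_not hcr hc
    exact ⟨r, by rw [update_of_ne hrx]; exact hr, (h1.trans h2).trans h3⟩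
  · obtain ⟨r, hr, hvr⟩ := hF.exists_root v
    have hrx : r ≠ x := fun h => hv (h ▸ hvr)
    exact ⟨r, by rw [update_of_ne hrx]; exact hr, reaches_update_of_not hvr hv⟩

theorem settles_update_self (hF : Settles F) : Settles (Function.update F x x) := by
  apply settles_of_roots; intro v
  by_cases hv : Reaches F v x
  · exact ⟨x, Function.update_self x x F, reaches_update_hit hv⟩
  · obtain ⟨r, hr, hvr⟩ := hF.exists_root v
    have hrx : r ≠ x := fun h => hv (h ▸ hvr)
    exact ⟨r, by rw [update_of_ne hrx]; exact hr, reaches_update_of_not hvr hv⟩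

theorem exists_pred {a b : K} (h : Reaches F a b) (hab : a ≠ b) :
    ∃ n u, F^[n] a = u ∧ F u = b ∧ u ≠ b ∧ ∀ m, m ≤ n → F^[m] a ≠ b := by
  obtain ⟨n, hn, hmin⟩ := exists_min_hit h
  have hn1 : 0 < n := by
    rcases Nat.eq_zero_or_pos n with h0 | h0
    · subst h0; exact absurd hn hab
    · exact h0
  refine ⟨n - 1, F^[n - 1] a, rfl, ?_, hmin _ (Nat.sub_lt hn1 one_pos), fun m hm =>
    hmin _ (lt_of_le_of_lt hm (Nat.sub_lt hn1 one_pos))⟩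
  have h' : F^[(n - 1) + 1] a = b := by rw [Nat.sub_add_cancel hn1]; exact hn
  rw [Function.iterate_succ_apply'] at h'
  exact h' 

end Settle

section Root
variable [Fintype K] [DecidableEq K] {F : K → K}

noncomputable def rootOf (F : K → K) (z : K) : K := F^[Fintype.card K] z

theorem rootOf_reaches (F : K → K) (z : K) : Reaches F z (rootOf F z) :=
  ⟨Fintype.card K, rfl⟩

theorem rootOf_fixed (hF : Settles F) (z : K) : F (rootOf F z) = rootOf F z := by
  classical
  have hz := hF z
  set n0 := Nat.find hz with hn0
  have hspec : F (F^[n0] z) = F^[n0] z := Nat.find_spec hz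
  have hle : n0 ≤ Fintype.card K := by
    by_contra hlt
    push_neg at hlt
    -- the map i ↦ F^[i] z on Fin (n0+1) is injective
    have key : ∀ i j : Fin (n0 + 1), (i : ℕ) < (j : ℕ) →
        F^[(i : ℕ)] z = F^[(j : ℕ)] z → False := by
      intro i j hlt' hij
      have hper : F^[(j : ℕ) - (i : ℕ)] (F^[(i : ℕ)] z) = F^[(i : ℕ)] z := by
        rw [← Function.iterate_add_apply, Nat.sub_add_cancel hlt'.le]
        exact hij.symm
      have hfix : F (F^[(i : ℕ)] z) = F^[(i : ℕ)] z :=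
        periodic_fix hF (Nat.sub_pos_of_lt hlt') hper
      have h1 : n0 ≤ (i : ℕ) := Nat.find_le hfix
      have h2 := j.isLt
      omega
    have hinj : Function.Injective (fun i : Fin (n0 + 1) => F^[(i : ℕ)] z) := by
      intro i j hij
      by_contra hne
      rcases lt_trichotomy (i : ℕ) (j : ℕ) with h | h | h
      · exact key i j h hij
      · exact hne (Fin.ext h)
      · exact key j i h hij.symm
    have := Fintype.card_le_of_injective _ hinj
    simp only [Fintype.card_fin] at this
    omega
  show F (F^[Fintype.card K] z) = F^[Fintype.card K] z
  rw [show Fintype.card K = (Fintype.card K - n0) + n0 from (Nat.sub_add_cancel hle).symm,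
    Function.iterate_add_apply, Function.iterate_fixed hspec, hspec]

theorem rootOf_eq (hF : Settles F) {z r : K} (h : Reaches F z r) (hr : F r = r) :
    rootOf F z = r :=
  root_eq (rootOf_reaches F z) (rootOf_fixed hF z) h hr

end Root

section Filters
variable [Fintype K] [DecidableEq K] {F : K → K} {x c : K}

theorem filter_fixed_update_ne (hcx : c ≠ x) (hx : F x = x) :
    univ.filter (fun v => update F x c v = v) = (univ.filter (fun v => F v = v)).erase x := by
  ext v
  simp only [mem_filter, mem_erase, mem_univ, true_and]
  by_cases hv : v = x
  · subst hv
    simp only [Function.update_self]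
    exact ⟨fun h => absurd h hcx, fun h => absurd rfl h.1⟩
  · rw [Function.update_of_ne hv]
    exact ⟨fun h => ⟨hv, h⟩, fun h => h.2⟩

theorem filter_fixed_update_of_ne (hx : F x ≠ x) (hcx : c ≠ x) :
    univ.filter (fun v => update F x c v = v) = univ.filter (fun v => F v = v) := by
  ext v
  simp only [mem_filter, mem_univ, true_and]
  by_cases hv : v = x
  · subst hv
    simp only [Function.update_self]
    exact ⟨fun h => absurd h hcx, fun h => absurd h hx⟩
  · rw [Function.update_of_ne hv]

theorem filter_fixed_update_self (hx : F x ≠ x) :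
    univ.filter (fun v => update F x x v = v) = insert x (univ.filter (fun v => F v = v)) := by
  ext v
  simp only [mem_filter, mem_univ, true_and, mem_insert]
  by_cases hv : v = x
  · subst hv
    simp [Function.update_self]
  · rw [Function.update_of_ne hv]
    exact ⟨fun h => Or.inr h, fun h => h.elim (fun h' => absurd h' hv) id⟩

end Filters

section Weights
variable [Fintype K] [DecidableEq K] (k : K → K → ℝ) {F G : K → K} {x c : K}

noncomputable def wOff (F : K → K) (s : Finset K) : ℝ :=
  ∏ v ∈ (univ \ s).filter (fun v => F v ≠ v), k v (F v)

theorem forestWeight_eq_wOff : forestWeight k F = wOff k F ∅ := by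
  simp [forestWeight, wOff]

theorem wOff_congr {s : Finset K} (h : ∀ v ∉ s, F v = G v) : wOff k F s = wOff k G s := by
  unfold wOff
  rw [show ((univ \ s).filter fun v => F v ≠ v) = ((univ \ s).filter fun v => G v ≠ v) by
    apply Finset.filter_congr
    intro v hv
    rw [Finset.mem_sdiff] at hv
    rw [h v hv.2]]
  apply Finset.prod_congr rfl
  intro v hv
  rw [mem_filter, Finset.mem_sdiff] at hv
  rw [h v hv.1.2]

theorem wOff_insert {s : Finset K} (hx : x ∉ s) :
    wOff k F s = (if F x = x then 1 else k x (F x)) * wOff k F (insert x s) := by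
  unfold wOff
  have hset : univ \ insert x s = (univ \ s).erase x := by
    ext v
    simp only [Finset.mem_sdiff, mem_insert, mem_erase, mem_univ, true_and]
    tauto
  rw [hset]
  by_cases hfx : F x = x
  · rw [if_pos hfx, one_mul]
    apply Finset.prod_congr _ (fun _ _ => rfl)
    ext v
    simp only [mem_filter, mem_erase, Finset.mem_sdiff, mem_univ, true_and]
    constructor
    · intro hv
      exact ⟨⟨fun hvx => hv.2 (hvx ▸ hfx), hv.1⟩, hv.2⟩
    · intro hv
      exact ⟨hv.1.2, hv.2⟩
  · rw [if_neg hfx]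
    have hxmem : x ∈ (univ \ s).filter (fun v => F v ≠ v) := by
      simp only [mem_filter, Finset.mem_sdiff, mem_univ, true_and]
      exact ⟨hx, hfx⟩
    rw [← Finset.mul_prod_erase _ _ hxmem]
    congr 1
    apply Finset.prod_congr _ (fun _ _ => rfl)
    ext v
    simp only [mem_filter, mem_erase, Finset.mem_sdiff, mem_univ, true_and]
    tauto

theorem forestWeight_split (x : K) :
    forestWeight k F = (if F x = x then 1 else k x (F x)) * wOff k F {x} := by
  rw [forestWeight_eq_wOff, wOff_insert k (Finset.notMem_empty x)]
  rfl

theorem wOff_update_single : wOff k (update F x c) {x} = wOff k F {x} :=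
  wOff_congr k fun v hv => update_of_ne (by simpa using hv) c F

theorem forestWeight_update_root (hx : F x = x) (hc : c ≠ x) :
    forestWeight k (update F x c) = k x c * forestWeight k F := by
  rw [forestWeight_split (F := F) k x, forestWeight_split (F := update F x c) k x,
    Function.update_self, if_neg hc, if_pos hx, one_mul, wOff_update_single]

theorem forestWeight_update_swap (hx : F x ≠ x) (hc : c ≠ x) :
    k x (F x) * forestWeight k (update F x c) = k x c * forestWeight k F := by
  rw [forestWeight_split (F := F) k x, forestWeight_split (F := update F x c) k x,
    Function.update_self, if_neg hc, if_neg hx, wOff_update_single]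
  ring

theorem forestWeight_update_cut (hx : F x ≠ x) :
    forestWeight k F = k x (F x) * forestWeight k (Function.update F x x) := by
  rw [forestWeight_split (F := F) k x, forestWeight_split (F := Function.update F x x) k x,
    Function.update_self, if_pos rfl, if_neg hx, one_mul, wOff_update_single]

end Weights

section PhiB
variable [DecidableEq K] {F : K → K} {z y : K}

theorem two_set_cases (F : K → K) (v a b : K) :
    (∀ m : ℕ, F^[m] v ≠ a ∧ F^[m] v ≠ b) ∨
      ∃ m, (F^[m] v = a ∨ F^[m] v = b) ∧ ∀ j, j < m → F^[j] v ≠ a ∧ F^[j] v ≠ b := by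
  classical
  by_cases h : ∃ m, F^[m] v = a ∨ F^[m] v = b
  · right
    refine ⟨Nat.find h, Nat.find_spec h, fun j hj => ?_⟩
    have hh := Nat.find_min h hj
    push_neg at hh
    exact hh
  · left
    push_neg at h
    exact h

theorem phi_apply_ne {v : K} (hvz : v ≠ z) (hvy : v ≠ y) :
    (Function.update (Function.update F z y) y y) v = F v := by
  rw [Function.update_of_ne hvy, Function.update_of_ne hvz]

theorem phi_apply_z (hzy : z ≠ y) :
    (Function.update (Function.update F z y) y y) z = y := by
  rw [Function.update_of_ne hzy, Function.update_self]

theorem phi_apply_y : (Function.update (Function.update F z y) y y) y = y := by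
  rw [Function.update_self]

theorem phi_reaches (hzy : z ≠ y) {v : K} (hv : Reaches F v z) :
    Reaches (Function.update (Function.update F z y) y y) v y := by
  rcases two_set_cases F v z y with h | ⟨m, hm, hmin⟩
  · obtain ⟨n, hn⟩ := hv
    exact absurd hn (h n).1
  · have hGm : (Function.update (Function.update F z y) y y)^[m] v = F^[m] v :=
      iterate_agree fun j hj => phi_apply_ne (hmin j hj).1 (hmin j hj).2
    rcases hm with h | h
    · exact Reaches.trans ⟨m, hGm.trans h⟩ ⟨1, by
        rw [Function.iterate_one]; exact phi_apply_z hzy⟩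
    · exact ⟨m, hGm.trans h⟩

theorem phi_settles (hS : Settles F) (hzy : z ≠ y) :
    Settles (Function.update (Function.update F z y) y y) := by
  apply settles_of_roots
  intro v
  rcases two_set_cases F v z y with h | ⟨m, hm, hmin⟩
  · obtain ⟨r, hr, n, hn⟩ := hS.exists_root v
    have hrz : r ≠ z := by rw [← hn]; exact (h n).1
    have hry : r ≠ y := by rw [← hn]; exact (h n).2
    refine ⟨r, by rw [phi_apply_ne hrz hry]; exact hr, ⟨n, ?_⟩⟩
    rw [iterate_agree fun j _ => phi_apply_ne (h j).1 (h j).2]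
    exact hn
  · have hGm : (Function.update (Function.update F z y) y y)^[m] v = F^[m] v :=
      iterate_agree fun j hj => phi_apply_ne (hmin j hj).1 (hmin j hj).2
    refine ⟨y, phi_apply_y, ?_⟩
    rcases hm with h | h
    · exact Reaches.trans ⟨m, hGm.trans h⟩ ⟨1, by
        rw [Function.iterate_one]; exact phi_apply_z hzy⟩
    · exact ⟨m, hGm.trans h⟩

theorem not_reaches_trunc {c u b : K} {n : ℕ} (hnu : F^[n] c = u)
    (hminu : ∀ j, j < n → F^[j] c ≠ u) (havoid : ∀ j, j ≤ n → F^[j] c ≠ b) (hub : u ≠ b) :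
    ¬ Reaches (Function.update F u u) c b := by
  rintro ⟨m, hm⟩
  by_cases hmn : m ≤ n
  · have heq : (Function.update F u u)^[m] c = F^[m] c :=
      iterate_update_eq fun j hj => hminu j (lt_of_lt_of_le hj hmn)
    exact havoid m hmn (heq.symm.trans hm)
  · push_neg at hmn
    have h1 : (Function.update F u u)^[n] c = u := by
      rw [iterate_update_eq fun j hj => hminu j hj]; exact hnu
    have h2 : (Function.update F u u)^[m] c = u := by
      have hx : (Function.update F u u)^[m - n] ((Function.update F u u)^[n] c) = u := by
        rw [h1]; exact Function.iterate_fixed (Function.update_self u u F) _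
      rwa [← Function.iterate_add_apply, Nat.sub_add_cancel hmn.le] at hx
    exact hub (h2.symm.trans hm)

end PhiB

section PhiBFin
variable [Fintype K] [DecidableEq K] {k : K → K → ℝ} {F : K → K} {z y : K}

theorem phi_filter (hzy : z ≠ y) (hFz : F z = z) (hFy : F y ≠ y) :
    univ.filter (fun v => (Function.update (Function.update F z y) y y) v = v)
      = insert y ((univ.filter fun v => F v = v).erase z) := by
  have h2 : (Function.update F z y) y ≠ y := by
    rw [Function.update_of_ne (Ne.symm hzy)]; exact hFy
  rw [filter_fixed_update_self h2, filter_fixed_update_ne (Ne.symm hzy) hFz]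

theorem phi_card (hzy : z ≠ y) (hFz : F z = z) (hFy : F y ≠ y)
    (h2 : (univ.filter fun v => F v = v).card = 2) :
    (univ.filter (fun v => (Function.update (Function.update F z y) y y) v = v)).card
      = 2 := by
  rw [phi_filter hzy hFz hFy, Finset.card_insert_of_notMem, Finset.card_erase_of_mem, h2]
  · simp [hFz]
  · intro hy
    exact hFy (Finset.mem_filter.1 (Finset.mem_of_mem_erase hy)).2

theorem phi_isTwoForest (h2F : IsTwoForest k F) (hzy : z ≠ y) (hFz : F z = z)
    (hFy : F y ≠ y) (hpos : 0 < k z y) :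
    IsTwoForest k (Function.update (Function.update F z y) y y) := by
  refine ⟨⟨phi_settles h2F.1.1 hzy, ?_⟩, phi_card hzy hFz hFy h2F.2⟩
  intro v hv
  by_cases hvy : v = y
  · subst hvy; rw [phi_apply_y] at hv; exact absurd rfl hv
  · by_cases hvz : v = z
    · subst hvz; rw [phi_apply_z hzy]; exact hpos
    · rw [phi_apply_ne hvz hvy] at hv ⊢; exact h2F.1.2 v hv

theorem forestWeight_pair (u b : K) (hub : u ≠ b) :
    forestWeight k F = (if F u = u then 1 else k u (F u)) *
      ((if F b = b then 1 else k b (F b)) * wOff k F (insert b {u})) := by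
  rw [forestWeight_eq_wOff, wOff_insert k (Finset.notMem_empty u)]
  have h1 : (insert u (∅ : Finset K)) = {u} := rfl
  rw [h1, wOff_insert k (x := b) (s := {u}) (Finset.notMem_singleton.2 (Ne.symm hub))]

theorem phiB_weight (hzy : z ≠ y) (hFz : F z = z) (hFyne : F y ≠ y) :
    k z y * forestWeight k F
      = k y (F y) * forestWeight k (Function.update (Function.update F z y) y y) := by
  have hGz : (Function.update (Function.update F z y) y y) z ≠ z := by
    rw [phi_apply_z hzy]; exact Ne.symm hzy
  have hwoff : wOff k (Function.update (Function.update F z y) y y) (insert y {z})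
      = wOff k F (insert y {z}) :=
    wOff_congr k fun v hv => by
      simp only [Finset.mem_insert, Finset.mem_singleton] at hv
      push_neg at hv
      exact phi_apply_ne hv.2 hv.1
  rw [forestWeight_pair (F := F) z y hzy,
    forestWeight_pair (F := Function.update (Function.update F z y) y y) z y hzy,
    if_pos hFz, if_neg hFyne, if_neg hGz, if_pos phi_apply_y, hwoff, phi_apply_z hzy]
  ring

end PhiBFin

section Key
variable [Fintype K] [DecidableEq K] {k : K → K → ℝ}

theorem gen_off {x z : K} (k : K → K → ℝ) (h : x ≠ z) : gen k x z = k x z := by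
  simp [gen, h]

theorem gen_diag (k : K → K → ℝ) (x : K) :
    gen k x x = -∑ z ∈ univ.erase x, k x z := by
  simp [gen]

theorem twoForest_filter_eq {F : K → K} {a b : K}
    (h2 : (univ.filter fun v => F v = v).card = 2) (ha : F a = a) (hb : F b = b)
    (hab : a ≠ b) : univ.filter (fun v => F v = v) = {a, b} := by
  refine (Finset.eq_of_subset_of_card_le ?_ ?_).symm
  · intro v hv
    rcases Finset.mem_insert.1 hv with h | h
    · subst h; simp [ha]
    · rw [Finset.mem_singleton] at h; subst h; simp [hb]
  · rw [h2, Finset.card_insert_of_notMem (by simpa using hab), Finset.card_singleton]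

theorem twoForest_other {F : K → K} (h : IsTwoForest k F) {a : K} (ha : F a = a) :
    ∃ b, F b = b ∧ b ≠ a := by
  have h1 : 1 < (univ.filter fun v => F v = v).card := by rw [h.2]; norm_num
  obtain ⟨b, hb, hba⟩ := Finset.exists_mem_ne h1 a
  exact ⟨b, (Finset.mem_filter.1 hb).2, hba⟩

theorem isTwoForest_update {F : K → K} {x c : K} (h : IsTwoForest k F)
    (hFx : F x ≠ x) (hcx : c ≠ x) (hpos : 0 < k x c) (hreach : ¬ Reaches F c x) :
    IsTwoForest k (Function.update F x c) := by
  refine ⟨⟨settles_update h.1.1 hreach, ?_⟩, ?_⟩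
  · intro v hv
    by_cases hvx : v = x
    · subst hvx; rw [Function.update_self]; exact hpos
    · rw [Function.update_of_ne hvx] at hv ⊢; exact h.1.2 v hv
  · rw [filter_fixed_update_of_ne hFx hcx]; exact h.2

theorem isSpTree_graft {F : K → K} {x c y : K} (h : IsTwoForest k F)
    (hFx : F x = x) (hFy : F y = y) (hxy : x ≠ y) (hcx : c ≠ x) (hpos : 0 < k x c)
    (hreach : ¬ Reaches F c x) : IsSpTree k (Function.update F x c) y := by
  refine ⟨⟨settles_update h.1.1 hreach, ?_⟩, ?_⟩
  · intro v hv
    by_cases hvx : v = x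
    · subst hvx; rw [Function.update_self]; exact hpos
    · rw [Function.update_of_ne hvx] at hv ⊢; exact h.1.2 v hv
  · rw [filter_fixed_update_ne hcx hFx, twoForest_filter_eq h.2 hFx hFy hxy,
      Finset.erase_insert (by simpa using hxy)]

theorem isTwoForest_cut {F : K → K} {x : K} (h : IsSpForest k F)
    (hfix : univ.filter (fun v => F v = v) = {y}) (hxy : x ≠ y) :
    IsTwoForest k (Function.update F x x) := by
  have hFx : F x ≠ x := by
    intro hx
    have : x ∈ univ.filter (fun v => F v = v) := by simp [hx]
    rw [hfix, Finset.mem_singleton] at this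
    exact hxy this
  refine ⟨⟨settles_update_self h.1, ?_⟩, ?_⟩
  · intro v hv
    by_cases hvx : v = x
    · subst hvx; rw [Function.update_self] at hv; exact absurd rfl hv
    · rw [Function.update_of_ne hvx] at hv ⊢; exact h.2 v hv
  · rw [filter_fixed_update_self hFx, hfix,
      Finset.card_insert_of_notMem (by simpa using hxy), Finset.card_singleton]

/-- every vertex of a spanning tree reaches the root -/
theorem tree_reaches {F : K → K} (h : IsSpForest k F)
    (hfix : univ.filter (fun v => F v = v) = {y}) (v : K) : Reaches F v y := by
  obtain ⟨r, hr, hvr⟩ := Settles.exists_root h.1 v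
  have : r ∈ univ.filter (fun v => F v = v) := by simp [hr]
  rw [hfix, Finset.mem_singleton] at this
  exact this ▸ hvr

theorem sum_pairs (s : Finset K) (P : K → (K → K) → Prop) (f : K → (K → K) → ℝ) :
    ∑ z ∈ s, ∑ F ∈ univ.filter (P z), f z F
      = ∑ p ∈ (s ×ˢ univ).filter (fun p : K × (K → K) => P p.1 p.2), f p.1 p.2 := by
  rw [Finset.sum_filter, Finset.sum_product]
  exact Finset.sum_congr rfl fun z _ => by rw [Finset.sum_filter]

theorem pairs_erase {x : K} (P : K × (K → K) → Prop) (f : K × (K → K) → ℝ) :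
    ∑ p ∈ ((univ.erase x) ×ˢ univ).filter P, f p
      = ∑ p ∈ (univ ×ˢ univ).filter (fun p => p.1 ≠ x ∧ P p), f p := by
  apply Finset.sum_congr _ (fun _ _ => rfl)
  ext p
  simp only [Finset.mem_filter, Finset.mem_product, Finset.mem_erase, Finset.mem_univ]
  tauto

theorem reaches_update_self_iff {F : K → K} {x a : K} :
    Reaches (Function.update F x x) a x ↔ Reaches F a x := by
  constructor
  · intro h
    obtain ⟨n, hn, hmin⟩ := exists_min_hit h
    refine ⟨n, ?_⟩
    rw [show F^[n] a = (Function.update F x x)^[n] a from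
      iterate_agree fun m hm => (Function.update_of_ne (hmin m hm) x F).symm]
    exact hn
  · exact fun h => reaches_update_hit h

noncomputable def pset (P : K × (K → K) → Prop) : Finset (K × (K → K)) :=
  @Finset.filter _ P (Classical.decPred P) (Finset.univ ×ˢ Finset.univ)

theorem mem_pset {P : K × (K → K) → Prop} {p : K × (K → K)} : p ∈ pset P ↔ P p := by
  unfold pset
  rw [Finset.mem_filter]
  simp [Finset.mem_product]

theorem pset_congr {P Q : K × (K → K) → Prop} (h : ∀ p, P p ↔ Q p) : pset P = pset Q := by
  ext p
  rw [mem_pset, mem_pset]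
  exact h p

theorem pset_filter (P C : K × (K → K) → Prop) :
    Finset.filter C (pset P) = pset (fun p => P p ∧ C p) := by
  ext p
  rw [Finset.mem_filter, mem_pset, mem_pset]

theorem sum_pset_split (P C : K × (K → K) → Prop) (f : K × (K → K) → ℝ) :
    ∑ p ∈ pset P, f p
      = ∑ p ∈ pset (fun p => P p ∧ C p), f p + ∑ p ∈ pset (fun p => P p ∧ ¬ C p), f p := by
  classical
  have h := Finset.sum_filter_add_sum_filter_not (pset P) C f
  rw [← h]
  congr 1
  · apply Finset.sum_congr _ (fun _ _ => rfl)
    ext p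
    simp only [mem_pset, Finset.mem_filter]
  · apply Finset.sum_congr _ (fun _ _ => rfl)
    ext p
    simp only [mem_pset, Finset.mem_filter]

theorem convert_sum (x : K) (c : K → ℝ) (hc : ∀ z, z ≠ x → 0 ≤ c z)
    (PP : K → (K → K) → Prop) :
    ∑ z ∈ univ.erase x, c z * ∑ F ∈ univ.filter (fun F => PP z F), forestWeight k F
      = ∑ p ∈ pset (fun p : K × (K → K) => (p.1 ≠ x ∧ PP p.1 p.2) ∧ 0 < c p.1),
        c p.1 * forestWeight k p.2 := by
  classical
  have h1 : ∑ z ∈ univ.erase x, c z * ∑ F ∈ univ.filter (fun F => PP z F), forestWeight k F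
      = ∑ z ∈ univ.erase x, ∑ F ∈ univ.filter (fun F => PP z F), c z * forestWeight k F :=
    Finset.sum_congr rfl fun z _ => Finset.mul_sum _ _ _
  rw [h1]
  rw [sum_pairs (univ.erase x) (fun z F => PP z F) (fun z F => c z * forestWeight k F)]
  rw [pairs_erase (x := x)]
  have hps : ∑ p ∈ (univ ×ˢ univ).filter (fun p : K × (K → K) => p.1 ≠ x ∧ PP p.1 p.2),
        c p.1 * forestWeight k p.2
      = ∑ p ∈ pset (fun p : K × (K → K) => p.1 ≠ x ∧ PP p.1 p.2),
        c p.1 * forestWeight k p.2 := by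
    apply Finset.sum_congr _ (fun _ _ => rfl)
    ext p
    rw [mem_pset, Finset.mem_filter]
    simp [Finset.mem_product]
  rw [hps, sum_pset_split (fun p : K × (K → K) => p.1 ≠ x ∧ PP p.1 p.2)
    (fun p => 0 < c p.1) (fun p => c p.1 * forestWeight k p.2)]
  have hzero : ∑ p ∈ pset (fun p : K × (K → K) => (p.1 ≠ x ∧ PP p.1 p.2) ∧ ¬ 0 < c p.1),
      c p.1 * forestWeight k p.2 = 0 := by
    apply Finset.sum_eq_zero
    intro p hp
    rw [mem_pset] at hp
    have h0 : c p.1 = 0 := le_antisymm (not_lt.1 hp.2) (hc p.1 hp.1.1)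
    rw [h0, zero_mul]
  rw [hzero, add_zero]

theorem bijA_cancel {x y : K} (hxy : x ≠ y) :
    ∑ p ∈ pset (fun p : K × (K → K) =>
        ((p.1 ≠ x ∧ (IsTwoForest k p.2 ∧ p.2 y = y ∧ Reaches p.2 x y)) ∧ 0 < k x p.1) ∧
          ¬ Reaches p.2 p.1 x),
      k x p.1 * forestWeight k p.2
    = ∑ p ∈ pset (fun p : K × (K → K) =>
        (((p.1 ≠ x ∧ (IsTwoForest k p.2 ∧ p.2 y = y ∧ Reaches p.2 p.1 y)) ∧ 0 < k x p.1) ∧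
          ¬ p.2 x = x) ∧ ¬ Reaches p.2 p.1 x),
      k x p.1 * forestWeight k p.2 := by
  classical
  refine Finset.sum_nbij' (i := fun p : K × (K → K) => (p.2 x, Function.update p.2 x p.1))
    (j := fun p : K × (K → K) => (p.2 x, Function.update p.2 x p.1)) ?_ ?_ ?_ ?_ ?_
  · intro p hp
    rw [mem_pset] at hp ⊢
    dsimp only
    obtain ⟨⟨⟨hzx, h2F, hFy, hxr⟩, hpos⟩, hnzx⟩ := hp
    have hFx : p.2 x ≠ x := fun h => hxy (reaches_fixed_eq h hxr).symm
    have h1 : Reaches p.2 (p.2 x) y := reaches_step hxr hxy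
    have h2 : ¬ Reaches p.2 (p.2 x) x := not_reaches_succ h2F.1.1 hFx
    refine ⟨⟨⟨⟨hFx, isTwoForest_update h2F hFx hzx hpos hnzx, ?_, ?_⟩,
      h2F.1.2 x hFx⟩, ?_⟩, ?_⟩
    · rw [Function.update_of_ne (Ne.symm hxy)]; exact hFy
    · exact reaches_update_of_not h1 h2
    · rw [Function.update_self]; exact hzx
    · exact not_reaches_update_of_not h2 h2
  · intro p hp
    rw [mem_pset] at hp ⊢
    dsimp only
    obtain ⟨⟨⟨⟨hzx, h2F, hFy, hzy⟩, hpos⟩, hFx⟩, hnzx⟩ := hp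
    have h2 : ¬ Reaches p.2 (p.2 x) x := not_reaches_succ h2F.1.1 hFx
    have hxz : Reaches (Function.update p.2 x p.1) x p.1 := ⟨1, by simp⟩
    refine ⟨⟨⟨hFx, isTwoForest_update h2F hFx hzx hpos hnzx, ?_, ?_⟩,
      h2F.1.2 x hFx⟩, ?_⟩
    · rw [Function.update_of_ne (Ne.symm hxy)]; exact hFy
    · exact hxz.trans (reaches_update_of_not hzy hnzx)
    · exact not_reaches_update_of_not h2 h2
  · intro p _
    simp [Function.update_self, Function.update_idem, Function.update_eq_self]
  · intro p _
    simp [Function.update_self, Function.update_idem, Function.update_eq_self]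
  · intro p hp
    rw [mem_pset] at hp
    obtain ⟨⟨⟨hzx, h2F, hFy, hxr⟩, hpos⟩, hnzx⟩ := hp
    have hFx : p.2 x ≠ x := fun h => hxy (reaches_fixed_eq h hxr).symm
    exact (forestWeight_update_swap k hFx hzx).symm

theorem bijA_root {x y : K} (hxy : x ≠ y) :
    ∑ p ∈ pset (fun p : K × (K → K) =>
        ((p.1 ≠ x ∧ (IsTwoForest k p.2 ∧ p.2 y = y ∧ Reaches p.2 p.1 y)) ∧ 0 < k x p.1) ∧
          p.2 x = x),
      k x p.1 * forestWeight k p.2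
    = treeWt k y := by
  classical
  rw [treeWt]
  refine Finset.sum_nbij' (i := fun p : K × (K → K) => Function.update p.2 x p.1)
    (j := fun T : K → K => (T x, Function.update T x x)) ?_ ?_ ?_ ?_ ?_
  · intro p hp
    rw [mem_pset] at hp
    rw [Finset.mem_filter]
    obtain ⟨⟨⟨hzx, h2F, hFy, hzy⟩, hpos⟩, hFx⟩ := hp
    have hnzx : ¬ Reaches p.2 p.1 x := fun h => hxy (root_eq h hFx hzy hFy)
    exact ⟨Finset.mem_univ _, isSpTree_graft h2F hFx hFy hxy hzx hpos hnzx⟩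
  · intro T hT
    rw [Finset.mem_filter] at hT
    rw [mem_pset]
    dsimp only
    obtain ⟨-, hfor, hfix⟩ := hT
    have hTx : T x ≠ x := by
      intro h
      have : x ∈ univ.filter (fun v => T v = v) := by simp [h]
      rw [hfix, Finset.mem_singleton] at this
      exact hxy this
    have hTy : T y = y := by
      have : y ∈ univ.filter (fun v => T v = v) := by
        rw [hfix]; exact Finset.mem_singleton_self y
      exact (Finset.mem_filter.1 this).2
    have h1 : Reaches T (T x) y := tree_reaches hfor hfix (T x)
    have h2 : ¬ Reaches T (T x) x := not_reaches_succ hfor.1 hTx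
    refine ⟨⟨⟨hTx, isTwoForest_cut hfor hfix hxy, ?_, ?_⟩,
      hfor.2 x hTx⟩, Function.update_self x x T⟩
    · rw [Function.update_of_ne (Ne.symm hxy)]; exact hTy
    · exact reaches_update_of_not h1 h2
  · intro p hp
    rw [mem_pset] at hp
    obtain ⟨⟨⟨hzx, h2F, hFy, hzy⟩, hpos⟩, hFx⟩ := hp
    have hupd : Function.update p.2 x x = p.2 := by
      funext v
      by_cases hv : v = x
      · subst hv; rw [Function.update_self, hFx]
      · rw [Function.update_of_ne hv]
    simp [Function.update_self, Function.update_idem, hupd]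
  · intro T _
    simp [Function.update_idem, Function.update_eq_self]
  · intro p hp
    rw [mem_pset] at hp
    obtain ⟨⟨⟨hzx, h2F, hFy, hzy⟩, hpos⟩, hFx⟩ := hp
    exact (forestWeight_update_root k hFx hzx).symm

theorem bij_rest (y : K) :
    ∑ p ∈ pset (fun p : K × (K → K) =>
        ((p.1 ≠ y ∧ (IsTwoForest k p.2 ∧ p.2 y = y ∧ Reaches p.2 y y)) ∧ 0 < k y p.1) ∧
          ¬ Reaches p.2 p.1 y),
      k y p.1 * forestWeight k p.2
    = ∑ r ∈ univ.erase y, treeWt k r := by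
  classical
  have hRHS : ∑ r ∈ univ.erase y, treeWt k r
      = ∑ q ∈ pset (fun q : K × (K → K) => q.1 ≠ y ∧ IsSpTree k q.2 q.1),
          forestWeight k q.2 := by
    simp only [treeWt]
    rw [sum_pairs (univ.erase y) (fun r T => IsSpTree k T r)
      (fun _ T => forestWeight k T), pairs_erase (x := y)]
    apply Finset.sum_congr _ (fun _ _ => rfl)
    ext p
    rw [mem_pset, Finset.mem_filter]
    simp [Finset.mem_product]
  rw [hRHS]
  refine Finset.sum_nbij'
    (i := fun p : K × (K → K) => (rootOf p.2 p.1, Function.update p.2 y p.1))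
    (j := fun q : K × (K → K) => (q.2 y, Function.update q.2 y y)) ?_ ?_ ?_ ?_ ?_
  · intro p hp
    rw [mem_pset] at hp ⊢
    dsimp only
    obtain ⟨⟨⟨hzy, h2F, hFy, -⟩, hpos⟩, hnzy⟩ := hp
    have hr : p.2 (rootOf p.2 p.1) = rootOf p.2 p.1 := rootOf_fixed h2F.1.1 p.1
    have hzr : Reaches p.2 p.1 (rootOf p.2 p.1) := rootOf_reaches p.2 p.1
    have hry : rootOf p.2 p.1 ≠ y := fun h => hnzy (h ▸ hzr)
    exact ⟨hry, isSpTree_graft h2F hFy hr (Ne.symm hry) hzy hpos hnzy⟩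
  · intro q hq
    rw [mem_pset] at hq ⊢
    dsimp only
    obtain ⟨hry, hfor, hfix⟩ := hq
    have hTy : q.2 y ≠ y := by
      intro h
      have : y ∈ univ.filter (fun v => q.2 v = v) := by simp [h]
      rw [hfix, Finset.mem_singleton] at this
      exact hry this.symm
    have h2 : ¬ Reaches q.2 (q.2 y) y := not_reaches_succ hfor.1 hTy
    refine ⟨⟨⟨hTy, isTwoForest_cut hfor hfix (Ne.symm hry), ?_, reaches_rfl _ _⟩,
      hfor.2 y hTy⟩, ?_⟩
    · exact Function.update_self y y q.2
    · intro h
      exact h2 (reaches_update_self_iff.1 h)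
  · intro p hp
    rw [mem_pset] at hp
    obtain ⟨⟨⟨hzy, h2F, hFy, -⟩, hpos⟩, hnzy⟩ := hp
    have hupd : Function.update p.2 y y = p.2 := by
      funext v
      by_cases hv : v = y
      · subst hv; rw [Function.update_self, hFy]
      · rw [Function.update_of_ne hv]
    simp [Function.update_self, Function.update_idem, hupd]
  · intro q hq
    rw [mem_pset] at hq
    obtain ⟨hry, hfor, hfix⟩ := hq
    have hTy : q.2 y ≠ y := by
      intro h
      have : y ∈ univ.filter (fun v => q.2 v = v) := by simp [h]
      rw [hfix, Finset.mem_singleton] at this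
      exact hry this.symm
    have h2 : ¬ Reaches q.2 (q.2 y) y := not_reaches_succ hfor.1 hTy
    have hupd : Function.update (Function.update q.2 y y) y (q.2 y) = q.2 := by
      rw [Function.update_idem]
      exact Function.update_eq_self y q.2
    have hroot : rootOf (Function.update q.2 y y) (q.2 y) = q.1 := by
      apply rootOf_eq (settles_update_self hfor.1)
      · exact reaches_update_of_not (tree_reaches hfor hfix (q.2 y)) h2
      · rw [Function.update_of_ne hry]
        have : q.1 ∈ univ.filter (fun v => q.2 v = v) := by
          rw [hfix]; exact Finset.mem_singleton_self _
        exact (Finset.mem_filter.1 this).2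
    dsimp only
    exact Prod.ext hroot hupd
  · intro p hp
    rw [mem_pset] at hp
    obtain ⟨⟨⟨hzy, h2F, hFy, -⟩, hpos⟩, hnzy⟩ := hp
    exact (forestWeight_update_root k hFy hzy).symm

theorem sum_filter_congr {α : Type*} [Fintype α] {p q : α → Prop} {hp : DecidablePred p}
    {hq : DecidablePred q} (h : ∀ a, p a ↔ q a) (f : α → ℝ) :
    ∑ a ∈ @Finset.filter α p hp univ, f a = ∑ a ∈ @Finset.filter α q hq univ, f a :=
  Finset.sum_congr (by
    ext a
    simp only [Finset.mem_filter]
    exact and_congr_right fun _ => h a) fun _ _ => rfl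

theorem update_update_cancel {F : K → K} {z c : K} (hFz : F z = z) :
    Function.update (Function.update F z c) z z = F := by
  funext v
  by_cases hv : v = z
  · subst hv; rw [Function.update_self, hFz]
  · rw [Function.update_of_ne hv, Function.update_of_ne hv]

theorem phi_recover {F : K → K} {z y : K} (hzy : z ≠ y) (hFz : F z = z) :
    Function.update (Function.update
      (Function.update (Function.update F z y) y y) z z) y (F y) = F := by
  funext v
  by_cases hvy : v = y
  · subst hvy; rw [Function.update_self]
  · rw [Function.update_of_ne hvy]
    by_cases hvz : v = z
    · subst hvz; rw [Function.update_self, hFz]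
    · rw [Function.update_of_ne hvz, phi_apply_ne hvz hvy]

theorem phi_surj_recover {F' : K → K} {u y c : K} (huy : u ≠ y) (hF'u : F' u = y)
    (hF'y : F' y = y) :
    Function.update (Function.update (Function.update
      (Function.update F' u u) y c) u y) y y = F' := by
  funext v
  by_cases hvy : v = y
  · subst hvy; rw [Function.update_self, hF'y]
  · rw [Function.update_of_ne hvy]
    by_cases hvu : v = u
    · subst hvu; rw [Function.update_self, hF'u]
    · rw [Function.update_of_ne hvu, Function.update_of_ne hvy, Function.update_of_ne hvu]

theorem sum_pset_empty {P : K × (K → K) → Prop} (h : ∀ p, ¬ P p)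
    (f : K × (K → K) → ℝ) : ∑ p ∈ pset P, f p = 0 :=
  Finset.sum_eq_zero fun p hp => absurd (mem_pset.1 hp) (h p)

theorem bijB_root {x y : K} (hxy : x ≠ y) :
    ∑ p ∈ pset (fun p : K × (K → K) =>
        ((p.1 ≠ y ∧ (IsTwoForest k p.2 ∧ p.2 p.1 = p.1 ∧ Reaches p.2 x p.1)) ∧ 0 < k p.1 y)
          ∧ p.2 y = y),
      k p.1 y * forestWeight k p.2
    = treeWt k y := by
  classical
  rw [treeWt]
  refine Finset.sum_bij
    (i := fun (p : K × (K → K)) (_ : p ∈ _) => Function.update p.2 p.1 y) ?_ ?_ ?_ ?_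
  · intro p hp
    rw [mem_pset] at hp
    obtain ⟨⟨⟨hzy, h2F, hFz, hxz⟩, hpos⟩, hFy⟩ := hp
    rw [Finset.mem_filter]
    exact ⟨Finset.mem_univ _, isSpTree_graft h2F hFz hFy hzy (Ne.symm hzy) hpos
      (fun h => hzy (reaches_fixed_eq hFy h))⟩
  · intro p1 hp1 p2 hp2 heq
    rw [mem_pset] at hp1 hp2
    obtain ⟨⟨⟨hzy1, h2F1, hFz1, hxz1⟩, hpos1⟩, hFy1⟩ := hp1
    obtain ⟨⟨⟨hzy2, h2F2, hFz2, hxz2⟩, hpos2⟩, hFy2⟩ := hp2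
    have hTz1 : (Function.update p1.2 p1.1 y) p1.1 = y := Function.update_self _ _ _
    have hTz2 : (Function.update p1.2 p1.1 y) p2.1 = y := by
      rw [heq]; exact Function.update_self _ _ _
    have hrx1 : Reaches (Function.update p1.2 p1.1 y) x p1.1 := reaches_update_hit hxz1
    have hrx2 : Reaches (Function.update p1.2 p1.1 y) x p2.1 := by
      rw [heq]; exact reaches_update_hit hxz2
    have hTy : (Function.update p1.2 p1.1 y) y = y := by
      rw [Function.update_of_ne (Ne.symm hzy1)]; exact hFy1
    have hz12 : p1.1 = p2.1 := pred_unique hTy hrx1 hTz1 hzy1 hrx2 hTz2 hzy2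
    have hF12 : p1.2 = p2.2 := by
      have e1 : Function.update (Function.update p1.2 p1.1 y) p1.1 p1.1 = p1.2 :=
        update_update_cancel hFz1
      have e2 : Function.update (Function.update p2.2 p2.1 y) p2.1 p2.1 = p2.2 :=
        update_update_cancel hFz2
      rw [← e1, ← e2, heq, hz12]
    exact Prod.ext hz12 hF12
  · intro T hT
    rw [Finset.mem_filter] at hT
    obtain ⟨-, hfor, hfix⟩ := hT
    have hxyT : Reaches T x y := tree_reaches hfor hfix x
    obtain ⟨n, u, hnu, hu, huy, hmin⟩ := exists_pred hxyT hxy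
    have hTy : T y = y := by
      have h1 : y ∈ univ.filter (fun v => T v = v) := by
        rw [hfix]; exact Finset.mem_singleton_self y
      exact (Finset.mem_filter.1 h1).2
    have hTu : T u ≠ u := by
      intro h
      have h1 : u ∈ univ.filter (fun v => T v = v) := by simp [h]
      rw [hfix, Finset.mem_singleton] at h1
      exact huy h1
    have hminu : ∀ m, m < n → T^[m] x ≠ u := by
      intro m hm h
      exact hmin (m + 1) (by omega) (by rw [Function.iterate_succ_apply', h]; exact hu)
    refine ⟨(u, Function.update T u u), ?_, ?_⟩
    · rw [mem_pset]
      dsimp only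
      refine ⟨⟨⟨huy, isTwoForest_cut hfor hfix huy, Function.update_self _ _ _, ?_⟩, ?_⟩, ?_⟩
      · exact ⟨n, by rw [iterate_update_eq hminu]; exact hnu⟩
      · have h1 := hfor.2 u hTu
        rwa [hu] at h1
      · rw [Function.update_of_ne (Ne.symm huy)]; exact hTy
    · dsimp only
      rw [Function.update_idem, ← hu]
      exact Function.update_eq_self u T
  · intro p hp
    rw [mem_pset] at hp
    obtain ⟨⟨⟨hzy, h2F, hFz, hxz⟩, hpos⟩, hFy⟩ := hp
    exact (forestWeight_update_root k hFz (Ne.symm hzy)).symm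

theorem phi_reaches_c {F : K → K} {z y : K} (hS : Settles F) (hzy : z ≠ y)
    (hFy : F y ≠ y) (hyz : Reaches F y z) :
    Reaches (Function.update (Function.update F z y) y y) (F y) z := by
  have hstep : Reaches F (F y) z := reaches_step hyz (Ne.symm hzy)
  have havy : ∀ m, F^[m] (F y) ≠ y := fun m hm => hFy (cycle_fix hS ⟨m, hm⟩)
  obtain ⟨n, hn, hminz⟩ := exists_min_hit hstep
  exact ⟨n, by
    rw [iterate_agree fun j hj => phi_apply_ne (hminz j hj) (havy j)]; exact hn⟩

theorem bijB_gamma (x y : K) :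
    ∑ p ∈ pset (fun p : K × (K → K) =>
        (((p.1 ≠ y ∧ (IsTwoForest k p.2 ∧ p.2 p.1 = p.1 ∧ Reaches p.2 x p.1))
            ∧ 0 < k p.1 y) ∧ ¬ p.2 y = y) ∧ Reaches p.2 y p.1),
      k p.1 y * forestWeight k p.2
    = ∑ p ∈ pset (fun p : K × (K → K) =>
        ((p.1 ≠ y ∧ (IsTwoForest k p.2 ∧ p.2 y = y ∧ Reaches p.2 x y)) ∧ 0 < k y p.1)
          ∧ Reaches p.2 p.1 y),
      k y p.1 * forestWeight k p.2 := by
  classical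
  refine Finset.sum_bij (i := fun (p : K × (K → K)) (_ : p ∈ _) =>
    (p.2 y, Function.update (Function.update p.2 p.1 y) y y)) ?_ ?_ ?_ ?_
  · intro p hp
    rw [mem_pset] at hp
    rw [mem_pset]
    obtain ⟨⟨⟨⟨hzy, h2F, hFz, hxz⟩, hpos⟩, hFy⟩, hyz⟩ := hp
    dsimp only
    refine ⟨⟨⟨hFy, phi_isTwoForest h2F hzy hFz hFy hpos, phi_apply_y, ?_⟩,
      h2F.1.2 y hFy⟩, ?_⟩
    · exact phi_reaches hzy hxz
    · exact Reaches.trans (phi_reaches_c h2F.1.1 hzy hFy hyz)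
        ⟨1, by rw [Function.iterate_one]; exact phi_apply_z hzy⟩
  · intro p1 hp1 p2 hp2 heq
    rw [mem_pset] at hp1 hp2
    obtain ⟨⟨⟨⟨hzy1, h2F1, hFz1, hxz1⟩, hpos1⟩, hFy1⟩, hyz1⟩ := hp1
    obtain ⟨⟨⟨⟨hzy2, h2F2, hFz2, hxz2⟩, hpos2⟩, hFy2⟩, hyz2⟩ := hp2
    have hc : p1.2 y = p2.2 y := (Prod.ext_iff.1 heq).1
    have hF' : Function.update (Function.update p1.2 p1.1 y) y y
        = Function.update (Function.update p2.2 p2.1 y) y y := (Prod.ext_iff.1 heq).2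
    have hr1 : Reaches (Function.update (Function.update p1.2 p1.1 y) y y) (p1.2 y) p1.1 :=
      phi_reaches_c h2F1.1.1 hzy1 hFy1 hyz1
    have hr2 : Reaches (Function.update (Function.update p1.2 p1.1 y) y y) (p1.2 y) p2.1 := by
      rw [hF', hc]; exact phi_reaches_c h2F2.1.1 hzy2 hFy2 hyz2
    have happ1 : (Function.update (Function.update p1.2 p1.1 y) y y) p1.1 = y :=
      phi_apply_z hzy1
    have happ2 : (Function.update (Function.update p1.2 p1.1 y) y y) p2.1 = y := by
      rw [hF']; exact phi_apply_z hzy2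
    have hz12 : p1.1 = p2.1 :=
      pred_unique phi_apply_y hr1 happ1 hzy1 hr2 happ2 hzy2
    have hF12 : p1.2 = p2.2 := by
      have e1 := phi_recover hzy1 hFz1
      have e2 := phi_recover hzy2 hFz2
      rw [← e1, ← e2, hF', hz12, hc]
    exact Prod.ext hz12 hF12
  · intro q hq
    rw [mem_pset] at hq
    obtain ⟨⟨⟨hcy, h2F', hF'y, hxY⟩, hposc⟩, hcY⟩ := hq
    obtain ⟨n, u, hnu, hu, huy, hmin⟩ := exists_pred hcY hcy
    have hminu : ∀ j, j < n → q.2^[j] q.1 ≠ u := by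
      intro j hj h
      exact hmin (j + 1) (by omega) (by rw [Function.iterate_succ_apply', h]; exact hu)
    have hF'u : q.2 u ≠ u := by rw [hu]; exact Ne.symm huy
    have hposu : 0 < k u y := by
      have h1 := h2F'.1.2 u hF'u
      rwa [hu] at h1
    obtain ⟨r, hr, hry⟩ := twoForest_other h2F' hF'y
    have hur : u ≠ r := fun h => hF'u (by rw [h]; exact hr)
    have hfix' : univ.filter (fun v => q.2 v = v) = {y, r} :=
      twoForest_filter_eq h2F'.2 hF'y hr (Ne.symm hry)
    have hAy : (Function.update q.2 u u) y = y := by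
      rw [Function.update_of_ne (Ne.symm huy)]; exact hF'y
    have hnrA : ¬ Reaches (Function.update q.2 u u) q.1 y :=
      not_reaches_trunc hnu hminu (fun j hj => hmin j hj) huy
    have hagree : ∀ v, v ≠ u → v ≠ y →
        (Function.update (Function.update q.2 u u) y q.1) v = q.2 v := by
      intro v hvu hvy
      rw [Function.update_of_ne hvy, Function.update_of_ne hvu]
    have hFu : (Function.update (Function.update q.2 u u) y q.1) u = u := by
      rw [Function.update_of_ne huy, Function.update_self]
    have hFyc : (Function.update (Function.update q.2 u u) y q.1) y = q.1 :=
      Function.update_self _ _ _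
    have hsettles : Settles (Function.update (Function.update q.2 u u) y q.1) :=
      settles_update (settles_update_self h2F'.1.1) hnrA
    have hfilter : univ.filter
          (fun v => (Function.update (Function.update q.2 u u) y q.1) v = v)
        = (insert u ({y, r} : Finset K)).erase y := by
      rw [filter_fixed_update_ne hcy hAy, filter_fixed_update_self hF'u, hfix']
    have hcard : (univ.filter
          (fun v => (Function.update (Function.update q.2 u u) y q.1) v = v)).card = 2 := by
      rw [hfilter, Finset.card_erase_of_mem (by simp), Finset.card_insert_of_notMem (by
        simp only [Finset.mem_insert, Finset.mem_singleton]
        push_neg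
        exact ⟨huy, hur⟩), Finset.card_insert_of_notMem (by
        simp only [Finset.mem_singleton]
        exact Ne.symm hry), Finset.card_singleton]
    have harcs : ∀ v, (Function.update (Function.update q.2 u u) y q.1) v ≠ v →
        0 < k v ((Function.update (Function.update q.2 u u) y q.1) v) := by
      intro v hv
      by_cases hvy : v = y
      · subst hvy; rw [hFyc]; exact hposc
      · by_cases hvu : v = u
        · subst hvu; exact absurd hFu hv
        · rw [hagree v hvu hvy] at hv ⊢; exact h2F'.1.2 v hv
    have h2F : IsTwoForest k (Function.update (Function.update q.2 u u) y q.1) :=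
      ⟨⟨hsettles, harcs⟩, hcard⟩
    have hcu : Reaches (Function.update (Function.update q.2 u u) y q.1) q.1 u := by
      refine ⟨n, ?_⟩
      rw [iterate_agree fun j hj => hagree _ (hminu j hj) (hmin j hj.le)]
      exact hnu
    have hyu : Reaches (Function.update (Function.update q.2 u u) y q.1) y u :=
      Reaches.trans ⟨1, by rw [Function.iterate_one]; exact hFyc⟩ hcu
    have hxu : Reaches (Function.update (Function.update q.2 u u) y q.1) x u := by
      rcases two_set_cases q.2 x u y with h | ⟨m, hm, hminj⟩
      · obtain ⟨m, hmy⟩ := hxY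
        exact absurd hmy (h m).2
      · have hFm : (Function.update (Function.update q.2 u u) y q.1)^[m] x = q.2^[m] x :=
          iterate_agree fun j hj => hagree _ (hminj j hj).1 (hminj j hj).2
        rcases hm with h | h
        · exact ⟨m, hFm.trans h⟩
        · exact Reaches.trans ⟨m, hFm.trans h⟩ hyu
    refine ⟨(u, Function.update (Function.update q.2 u u) y q.1), ?_, ?_⟩
    · rw [mem_pset]
      exact ⟨⟨⟨⟨huy, h2F, hFu, hxu⟩, hposu⟩, fun h => hcy (hFyc.symm.trans h)⟩, hyu⟩
    · dsimp only
      exact Prod.ext hFyc (phi_surj_recover huy hu hF'y)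
  · intro p hp
    rw [mem_pset] at hp
    obtain ⟨⟨⟨⟨hzy, h2F, hFz, hxz⟩, hpos⟩, hFy⟩, hyz⟩ := hp
    exact phiB_weight hzy hFz hFy

theorem bijB_beta {x y : K} (hxy : x ≠ y) :
    ∑ p ∈ pset (fun p : K × (K → K) =>
        (((p.1 ≠ y ∧ (IsTwoForest k p.2 ∧ p.2 p.1 = p.1 ∧ Reaches p.2 x p.1))
            ∧ 0 < k p.1 y) ∧ ¬ p.2 y = y) ∧ ¬ Reaches p.2 y p.1),
      k p.1 y * forestWeight k p.2
    = ∑ p ∈ pset (fun p : K × (K → K) =>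
        ((p.1 ≠ y ∧ (IsTwoForest k p.2 ∧ p.2 y = y ∧ Reaches p.2 x y)) ∧ 0 < k y p.1)
          ∧ ¬ Reaches p.2 p.1 y),
      k y p.1 * forestWeight k p.2 := by
  classical
  refine Finset.sum_bij (i := fun (p : K × (K → K)) (_ : p ∈ _) =>
    (p.2 y, Function.update (Function.update p.2 p.1 y) y y)) ?_ ?_ ?_ ?_
  · intro p hp
    rw [mem_pset] at hp
    rw [mem_pset]
    obtain ⟨⟨⟨⟨hzy, h2F, hFz, hxz⟩, hpos⟩, hFy⟩, hnyz⟩ := hp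
    dsimp only
    have h1 : ¬ Reaches p.2 (p.2 y) y := not_reaches_succ h2F.1.1 hFy
    have h2 : ¬ Reaches p.2 (p.2 y) p.1 := fun h => hnyz ((reaches_one p.2 y).trans h)
    refine ⟨⟨⟨hFy, phi_isTwoForest h2F hzy hFz hFy hpos, phi_apply_y,
      phi_reaches hzy hxz⟩, h2F.1.2 y hFy⟩, ?_⟩
    rintro ⟨m, hm⟩
    apply h1
    refine ⟨m, ?_⟩
    rw [← iterate_agree (n := m) fun j _ => phi_apply_ne (forall_of_not_reaches h2 j)
      (forall_of_not_reaches h1 j)]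
    exact hm
  · intro p1 hp1 p2 hp2 heq
    rw [mem_pset] at hp1 hp2
    obtain ⟨⟨⟨⟨hzy1, h2F1, hFz1, hxz1⟩, hpos1⟩, hFy1⟩, hnyz1⟩ := hp1
    obtain ⟨⟨⟨⟨hzy2, h2F2, hFz2, hxz2⟩, hpos2⟩, hFy2⟩, hnyz2⟩ := hp2
    have hc : p1.2 y = p2.2 y := (Prod.ext_iff.1 heq).1
    have hF' : Function.update (Function.update p1.2 p1.1 y) y y
        = Function.update (Function.update p2.2 p2.1 y) y y := (Prod.ext_iff.1 heq).2
    have key : ∀ (p : K × (K → K)), p.1 ≠ y → IsTwoForest k p.2 → p.2 p.1 = p.1 →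
        Reaches p.2 x p.1 → ¬ Reaches p.2 y p.1 →
        Reaches (Function.update (Function.update p.2 p.1 y) y y) x p.1 := by
      intro p hzy h2F hFz hxz hnyz
      obtain ⟨n, hn, hminz⟩ := exists_min_hit hxz
      have havy : ∀ j, j < n → p.2^[j] x ≠ y := by
        intro j hj h
        apply hnyz
        refine ⟨n - j, ?_⟩
        rw [← h, ← Function.iterate_add_apply, Nat.sub_add_cancel hj.le]
        exact hn
      exact ⟨n, by
        rw [iterate_agree fun j hj => phi_apply_ne (hminz j hj) (havy j hj)]; exact hn⟩
    have hr1 := key p1 hzy1 h2F1 hFz1 hxz1 hnyz1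
    have hr2' := key p2 hzy2 h2F2 hFz2 hxz2 hnyz2
    have hr2 : Reaches (Function.update (Function.update p1.2 p1.1 y) y y) x p2.1 := by
      rw [hF']; exact hr2'
    have happ1 : (Function.update (Function.update p1.2 p1.1 y) y y) p1.1 = y :=
      phi_apply_z hzy1
    have happ2 : (Function.update (Function.update p1.2 p1.1 y) y y) p2.1 = y := by
      rw [hF']; exact phi_apply_z hzy2
    have hz12 : p1.1 = p2.1 :=
      pred_unique phi_apply_y hr1 happ1 hzy1 hr2 happ2 hzy2
    have hF12 : p1.2 = p2.2 := by
      have e1 := phi_recover hzy1 hFz1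
      have e2 := phi_recover hzy2 hFz2
      rw [← e1, ← e2, hF', hz12, hc]
    exact Prod.ext hz12 hF12
  · intro q hq
    rw [mem_pset] at hq
    obtain ⟨⟨⟨hcy, h2F', hF'y, hxY⟩, hposc⟩, hnrcy⟩ := hq
    obtain ⟨n, u, hnu, hu, huy, hmin⟩ := exists_pred hxY hxy
    have hminu : ∀ j, j < n → q.2^[j] x ≠ u := by
      intro j hj h
      exact hmin (j + 1) (by omega) (by rw [Function.iterate_succ_apply', h]; exact hu)
    have hF'u : q.2 u ≠ u := by rw [hu]; exact Ne.symm huy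
    have hposu : 0 < k u y := by
      have h1 := h2F'.1.2 u hF'u
      rwa [hu] at h1
    obtain ⟨r, hr, hry⟩ := twoForest_other h2F' hF'y
    have hur : u ≠ r := fun h => hF'u (by rw [h]; exact hr)
    have hfix' : univ.filter (fun v => q.2 v = v) = {y, r} :=
      twoForest_filter_eq h2F'.2 hF'y hr (Ne.symm hry)
    have hAy : (Function.update q.2 u u) y = y := by
      rw [Function.update_of_ne (Ne.symm huy)]; exact hF'y
    have hnrcu : ¬ Reaches q.2 q.1 u := by
      rintro ⟨m, hm⟩
      exact hnrcy ⟨m + 1, by rw [Function.iterate_succ_apply', hm]; exact hu⟩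
    have hnrA : ¬ Reaches (Function.update q.2 u u) q.1 y :=
      fun h => hnrcy ((reaches_update_iff_of_not hnrcu).1 h)
    have hagree : ∀ v, v ≠ u → v ≠ y →
        (Function.update (Function.update q.2 u u) y q.1) v = q.2 v := by
      intro v hvu hvy
      rw [Function.update_of_ne hvy, Function.update_of_ne hvu]
    have hFu : (Function.update (Function.update q.2 u u) y q.1) u = u := by
      rw [Function.update_of_ne huy, Function.update_self]
    have hFyc : (Function.update (Function.update q.2 u u) y q.1) y = q.1 :=
      Function.update_self _ _ _
    have hsettles : Settles (Function.update (Function.update q.2 u u) y q.1) :=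
      settles_update (settles_update_self h2F'.1.1) hnrA
    have hfilter : univ.filter
          (fun v => (Function.update (Function.update q.2 u u) y q.1) v = v)
        = (insert u ({y, r} : Finset K)).erase y := by
      rw [filter_fixed_update_ne hcy hAy, filter_fixed_update_self hF'u, hfix']
    have hcard : (univ.filter
          (fun v => (Function.update (Function.update q.2 u u) y q.1) v = v)).card = 2 := by
      rw [hfilter, Finset.card_erase_of_mem (by simp), Finset.card_insert_of_notMem (by
        simp only [Finset.mem_insert, Finset.mem_singleton]
        push_neg
        exact ⟨huy, hur⟩), Finset.card_insert_of_notMem (by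
        simp only [Finset.mem_singleton]
        exact Ne.symm hry), Finset.card_singleton]
    have harcs : ∀ v, (Function.update (Function.update q.2 u u) y q.1) v ≠ v →
        0 < k v ((Function.update (Function.update q.2 u u) y q.1) v) := by
      intro v hv
      by_cases hvy : v = y
      · subst hvy; rw [hFyc]; exact hposc
      · by_cases hvu : v = u
        · subst hvu; exact absurd hFu hv
        · rw [hagree v hvu hvy] at hv ⊢; exact h2F'.1.2 v hv
    have h2F : IsTwoForest k (Function.update (Function.update q.2 u u) y q.1) :=
      ⟨⟨hsettles, harcs⟩, hcard⟩
    have hxu : Reaches (Function.update (Function.update q.2 u u) y q.1) x u := by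
      refine ⟨n, ?_⟩
      rw [iterate_agree fun j hj => hagree _ (hminu j hj) (hmin j hj.le)]
      exact hnu
    have hall : ∀ j : ℕ, (Function.update (Function.update q.2 u u) y q.1)^[j] q.1
        = q.2^[j] q.1 := fun j =>
      iterate_agree fun i _ => hagree _ (forall_of_not_reaches hnrcu i)
        (forall_of_not_reaches hnrcy i)
    have hnyu : ¬ Reaches (Function.update (Function.update q.2 u u) y q.1) y u := by
      rintro ⟨m, hm⟩
      cases m with
      | zero => exact huy (hm.symm)
      | succ j =>
        rw [Function.iterate_succ_apply, hFyc] at hm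
        have : (Function.update (Function.update q.2 u u) y q.1)^[j] q.1 = u := hm
        rw [hall j] at this
        exact hnrcu ⟨j, this⟩
    refine ⟨(u, Function.update (Function.update q.2 u u) y q.1), ?_, ?_⟩
    · rw [mem_pset]
      exact ⟨⟨⟨⟨huy, h2F, hFu, hxu⟩, hposu⟩, fun h => hcy (hFyc.symm.trans h)⟩, hnyu⟩
    · dsimp only
      exact Prod.ext hFyc (phi_surj_recover huy hu hF'y)
  · intro p hp
    rw [mem_pset] at hp
    obtain ⟨⟨⟨⟨hzy, h2F, hFz, hxz⟩, hpos⟩, hFy⟩, hnyz⟩ := hp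
    exact phiB_weight hzy hFz hFy

theorem keyA (hk : ∀ a b : K, a ≠ b → 0 ≤ k a b) (x y : K) :
    ∑ z, gen k x z * wTo k z y = treeWt k y - (if x = y then treeWtTotal k else 0) := by
  classical
  have hwto : ∀ z : K, wTo k z y = ∑ F ∈ univ.filter
      (fun F : K → K => IsTwoForest k F ∧ F y = y ∧ Reaches F z y), forestWeight k F :=
    fun z => rfl
  have hmain : ∑ z, gen k x z * wTo k z y
      = (∑ z ∈ univ.erase x, k x z * wTo k z y) - ∑ z ∈ univ.erase x, k x z * wTo k x y := by
    rw [← Finset.add_sum_erase _ (fun z => gen k x z * wTo k z y) (Finset.mem_univ x),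
      gen_diag]
    have hcongr : ∑ z ∈ univ.erase x, gen k x z * wTo k z y
        = ∑ z ∈ univ.erase x, k x z * wTo k z y :=
      Finset.sum_congr rfl fun z hz => by
        rw [gen_off k (Ne.symm (Finset.mem_erase.1 hz).1)]
    rw [hcongr, neg_mul, Finset.sum_mul]
    ring
  rw [hmain]
  have hT1 : ∑ z ∈ univ.erase x, k x z * wTo k z y
      = ∑ p ∈ pset (fun p : K × (K → K) =>
          (p.1 ≠ x ∧ (IsTwoForest k p.2 ∧ p.2 y = y ∧ Reaches p.2 p.1 y)) ∧ 0 < k x p.1),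
        k x p.1 * forestWeight k p.2 := by
    have h := convert_sum (k := k) x (k x) (fun z hz => hk x z (Ne.symm hz))
      (fun z F => IsTwoForest k F ∧ F y = y ∧ Reaches F z y)
    exact (Finset.sum_congr rfl fun z (_ : z ∈ univ.erase x) => by
      rw [hwto]
      exact congrArg (fun t => k x z * t) (sum_filter_congr (fun F => Iff.rfl) _)).trans h
  have hT2 : ∑ z ∈ univ.erase x, k x z * wTo k x y
      = ∑ p ∈ pset (fun p : K × (K → K) =>
          (p.1 ≠ x ∧ (IsTwoForest k p.2 ∧ p.2 y = y ∧ Reaches p.2 x y)) ∧ 0 < k x p.1),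
        k x p.1 * forestWeight k p.2 := by
    have h := convert_sum (k := k) x (k x) (fun z hz => hk x z (Ne.symm hz))
      (fun z F => IsTwoForest k F ∧ F y = y ∧ Reaches F x y)
    exact (Finset.sum_congr rfl fun z (_ : z ∈ univ.erase x) => by
      rw [hwto]
      exact congrArg (fun t => k x z * t) (sum_filter_congr (fun F => Iff.rfl) _)).trans h
  rw [hT1, hT2]
  by_cases hxy : x = y
  · subst hxy
    rw [if_pos rfl]
    rw [sum_pset_split (fun p : K × (K → K) =>
        (p.1 ≠ x ∧ (IsTwoForest k p.2 ∧ p.2 x = x ∧ Reaches p.2 x x)) ∧ 0 < k x p.1)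
      (fun p => Reaches p.2 p.1 x) (fun p => k x p.1 * forestWeight k p.2)]
    have he1 : pset (fun p : K × (K → K) =>
          ((p.1 ≠ x ∧ (IsTwoForest k p.2 ∧ p.2 x = x ∧ Reaches p.2 x x)) ∧ 0 < k x p.1) ∧
            Reaches p.2 p.1 x)
        = pset (fun p : K × (K → K) =>
          (p.1 ≠ x ∧ (IsTwoForest k p.2 ∧ p.2 x = x ∧ Reaches p.2 p.1 x)) ∧ 0 < k x p.1) := by
      apply pset_congr
      intro p
      constructor
      · rintro ⟨⟨⟨hzx, h2F, hFy, -⟩, hpos⟩, hr⟩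
        exact ⟨⟨hzx, h2F, hFy, hr⟩, hpos⟩
      · rintro ⟨⟨hzx, h2F, hFy, hr⟩, hpos⟩
        exact ⟨⟨⟨hzx, h2F, hFy, reaches_rfl _ _⟩, hpos⟩, hr⟩
    have he2 : ∑ p ∈ pset (fun p : K × (K → K) =>
          ((p.1 ≠ x ∧ (IsTwoForest k p.2 ∧ p.2 x = x ∧ Reaches p.2 x x)) ∧ 0 < k x p.1) ∧
            ¬ Reaches p.2 p.1 x), k x p.1 * forestWeight k p.2
        = ∑ r ∈ univ.erase x, treeWt k r := bij_rest x
    have he3 : treeWtTotal k = treeWt k x + ∑ r ∈ univ.erase x, treeWt k r := by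
      rw [treeWtTotal, ← Finset.add_sum_erase _ _ (Finset.mem_univ x)]
    rw [he1, he2, he3]
    ring
  · rw [if_neg hxy, sub_zero]
    rw [sum_pset_split (fun p : K × (K → K) =>
        (p.1 ≠ x ∧ (IsTwoForest k p.2 ∧ p.2 y = y ∧ Reaches p.2 p.1 y)) ∧ 0 < k x p.1)
      (fun p => p.2 x = x) (fun p => k x p.1 * forestWeight k p.2)]
    rw [sum_pset_split (fun p : K × (K → K) =>
        ((p.1 ≠ x ∧ (IsTwoForest k p.2 ∧ p.2 y = y ∧ Reaches p.2 p.1 y)) ∧ 0 < k x p.1) ∧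
          ¬ p.2 x = x)
      (fun p => Reaches p.2 p.1 x) (fun p => k x p.1 * forestWeight k p.2)]
    rw [sum_pset_split (fun p : K × (K → K) =>
        (p.1 ≠ x ∧ (IsTwoForest k p.2 ∧ p.2 y = y ∧ Reaches p.2 x y)) ∧ 0 < k x p.1)
      (fun p => Reaches p.2 p.1 x) (fun p => k x p.1 * forestWeight k p.2)]
    have hroot : ∑ p ∈ pset (fun p : K × (K → K) =>
          ((p.1 ≠ x ∧ (IsTwoForest k p.2 ∧ p.2 y = y ∧ Reaches p.2 p.1 y)) ∧ 0 < k x p.1) ∧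
            p.2 x = x), k x p.1 * forestWeight k p.2 = treeWt k y := bijA_root hxy
    have hbb : pset (fun p : K × (K → K) =>
          (((p.1 ≠ x ∧ (IsTwoForest k p.2 ∧ p.2 y = y ∧ Reaches p.2 p.1 y)) ∧ 0 < k x p.1) ∧
            ¬ p.2 x = x) ∧ Reaches p.2 p.1 x)
        = pset (fun p : K × (K → K) =>
          ((p.1 ≠ x ∧ (IsTwoForest k p.2 ∧ p.2 y = y ∧ Reaches p.2 x y)) ∧ 0 < k x p.1) ∧
            Reaches p.2 p.1 x) := by
      apply pset_congr
      intro p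
      constructor
      · rintro ⟨⟨⟨⟨hzx, h2F, hFy, hzy⟩, hpos⟩, hFx⟩, hr⟩
        refine ⟨⟨⟨hzx, h2F, hFy, ?_⟩, hpos⟩, hr⟩
        rcases reaches_total hr hzy with h | h
        · exact h
        · exact absurd (reaches_fixed_eq hFy h) hxy
      · rintro ⟨⟨⟨hzx, h2F, hFy, hxr⟩, hpos⟩, hr⟩
        exact ⟨⟨⟨⟨hzx, h2F, hFy, hr.trans hxr⟩, hpos⟩,
          fun h => hxy (reaches_fixed_eq h hxr).symm⟩, hr⟩
    have haa := bijA_cancel (k := k) hxy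
    rw [hroot, hbb, haa]
    ring

theorem keyB (hk : ∀ a b : K, a ≠ b → 0 ≤ k a b) (x y : K) :
    ∑ z, wTo k x z * gen k z y = treeWt k y - (if x = y then treeWtTotal k else 0) := by
  classical
  have hwto : ∀ z : K, wTo k x z = ∑ F ∈ univ.filter
      (fun F : K → K => IsTwoForest k F ∧ F z = z ∧ Reaches F x z), forestWeight k F :=
    fun z => rfl
  have hmain : ∑ z, wTo k x z * gen k z y
      = (∑ z ∈ univ.erase y, k z y * wTo k x z)
        - ∑ c ∈ univ.erase y, k y c * wTo k x y := by
    rw [← Finset.add_sum_erase _ (fun z => wTo k x z * gen k z y) (Finset.mem_univ y),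
      gen_diag]
    have hcongr : ∑ z ∈ univ.erase y, wTo k x z * gen k z y
        = ∑ z ∈ univ.erase y, k z y * wTo k x z :=
      Finset.sum_congr rfl fun z hz => by
        rw [gen_off k ((Finset.mem_erase.1 hz).1), mul_comm]
    have h2 : ∑ c ∈ univ.erase y, wTo k x y * k y c
        = ∑ c ∈ univ.erase y, k y c * wTo k x y :=
      Finset.sum_congr rfl fun c _ => mul_comm _ _
    rw [hcongr, mul_neg, Finset.mul_sum, h2]
    ring
  rw [hmain]
  have hT1 : ∑ z ∈ univ.erase y, k z y * wTo k x z
      = ∑ p ∈ pset (fun p : K × (K → K) =>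
          (p.1 ≠ y ∧ (IsTwoForest k p.2 ∧ p.2 p.1 = p.1 ∧ Reaches p.2 x p.1))
            ∧ 0 < k p.1 y),
        k p.1 y * forestWeight k p.2 := by
    have h := convert_sum (k := k) y (fun z => k z y) (fun z hz => hk z y hz)
      (fun z F => IsTwoForest k F ∧ F z = z ∧ Reaches F x z)
    exact (Finset.sum_congr rfl fun z (_ : z ∈ univ.erase y) => by
      rw [hwto]
      exact congrArg (fun t => k z y * t) (sum_filter_congr (fun F => Iff.rfl) _)).trans h
  have hT2 : ∑ c ∈ univ.erase y, k y c * wTo k x y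
      = ∑ p ∈ pset (fun p : K × (K → K) =>
          (p.1 ≠ y ∧ (IsTwoForest k p.2 ∧ p.2 y = y ∧ Reaches p.2 x y)) ∧ 0 < k y p.1),
        k y p.1 * forestWeight k p.2 := by
    have h := convert_sum (k := k) y (k y) (fun z hz => hk y z (Ne.symm hz))
      (fun c F => IsTwoForest k F ∧ F y = y ∧ Reaches F x y)
    exact (Finset.sum_congr rfl fun c (_ : c ∈ univ.erase y) => by
      rw [hwto]
      exact congrArg (fun t => k y c * t) (sum_filter_congr (fun F => Iff.rfl) _)).trans h
  rw [hT1, hT2]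
  rw [sum_pset_split (fun p : K × (K → K) =>
      (p.1 ≠ y ∧ (IsTwoForest k p.2 ∧ p.2 p.1 = p.1 ∧ Reaches p.2 x p.1)) ∧ 0 < k p.1 y)
    (fun p => p.2 y = y) (fun p => k p.1 y * forestWeight k p.2)]
  rw [sum_pset_split (fun p : K × (K → K) =>
      ((p.1 ≠ y ∧ (IsTwoForest k p.2 ∧ p.2 p.1 = p.1 ∧ Reaches p.2 x p.1)) ∧ 0 < k p.1 y)
        ∧ ¬ p.2 y = y)
    (fun p => Reaches p.2 y p.1) (fun p => k p.1 y * forestWeight k p.2)]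
  rw [sum_pset_split (fun p : K × (K → K) =>
      (p.1 ≠ y ∧ (IsTwoForest k p.2 ∧ p.2 y = y ∧ Reaches p.2 x y)) ∧ 0 < k y p.1)
    (fun p => Reaches p.2 p.1 y) (fun p => k y p.1 * forestWeight k p.2)]
  have hγ := bijB_gamma (k := k) x y
  by_cases hxy : x = y
  · subst hxy
    rw [if_pos rfl]
    have hα : ∑ p ∈ pset (fun p : K × (K → K) =>
        ((p.1 ≠ x ∧ (IsTwoForest k p.2 ∧ p.2 p.1 = p.1 ∧ Reaches p.2 x p.1))
          ∧ 0 < k p.1 x) ∧ p.2 x = x),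
        k p.1 x * forestWeight k p.2 = 0 :=
      sum_pset_empty (fun p hp => hp.1.1.1 (reaches_fixed_eq hp.2 hp.1.1.2.2.2)) _
    have hβ : ∑ p ∈ pset (fun p : K × (K → K) =>
        (((p.1 ≠ x ∧ (IsTwoForest k p.2 ∧ p.2 p.1 = p.1 ∧ Reaches p.2 x p.1))
          ∧ 0 < k p.1 x) ∧ ¬ p.2 x = x) ∧ ¬ Reaches p.2 x p.1),
        k p.1 x * forestWeight k p.2 = 0 :=
      sum_pset_empty (fun p hp => hp.2 hp.1.1.1.2.2.2) _
    have ha := bij_rest (k := k) x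
    have he3 : treeWtTotal k = treeWt k x + ∑ r ∈ univ.erase x, treeWt k r := by
      rw [treeWtTotal, ← Finset.add_sum_erase _ _ (Finset.mem_univ x)]
    rw [hα, hβ, hγ, ha, he3]
    ring
  · rw [if_neg hxy, sub_zero]
    have hroot := bijB_root (k := k) hxy
    have hβ := bijB_beta (k := k) hxy
    rw [hroot, hβ, hγ]
    ring

theorem keyC (x : K) : ∑ y, wTo k x y = wTwoTotal k := by
  classical
  have hwto : ∀ z : K, wTo k x z = ∑ F ∈ univ.filter
      (fun F : K → K => IsTwoForest k F ∧ F z = z ∧ Reaches F x z), forestWeight k F :=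
    fun z => rfl
  have h2 : ∑ y, wTo k x y
      = ∑ p ∈ pset (fun p : K × (K → K) =>
          IsTwoForest k p.2 ∧ p.2 p.1 = p.1 ∧ Reaches p.2 x p.1), forestWeight k p.2 := by
    have h := sum_pairs (univ : Finset K)
      (fun z F => IsTwoForest k F ∧ F z = z ∧ Reaches F x z)
      (fun _ F => forestWeight k F)
    refine ((Finset.sum_congr rfl fun y (_ : y ∈ (univ : Finset K)) => by
      rw [hwto]
      exact sum_filter_congr (fun F => Iff.rfl) _).trans h).trans ?_
    apply Finset.sum_congr _ (fun _ _ => rfl)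
    ext p
    simp only [mem_pset, Finset.mem_filter, Finset.mem_product, Finset.mem_univ, true_and]
  rw [h2, wTwoTotal]
  refine Finset.sum_bij (i := fun (p : K × (K → K)) (_ : p ∈ _) => p.2) ?_ ?_ ?_ ?_
  · intro p hp
    rw [mem_pset] at hp
    rw [Finset.mem_filter]
    exact ⟨Finset.mem_univ _, hp.1⟩
  · intro p1 hp1 p2 hp2 heq
    rw [mem_pset] at hp1 hp2
    obtain ⟨h2F1, hfix1, hr1⟩ := hp1
    obtain ⟨h2F2, hfix2, hr2⟩ := hp2
    have hr2' : Reaches p1.2 x p2.1 := by rw [heq]; exact hr2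
    have hfix2' : p1.2 p2.1 = p2.1 := by rw [heq]; exact hfix2
    exact Prod.ext (root_eq hr1 hfix1 hr2' hfix2') heq
  · intro F hF
    rw [Finset.mem_filter] at hF
    refine ⟨(rootOf F x, F), ?_, rfl⟩
    rw [mem_pset]
    exact ⟨hF.2, rootOf_fixed hF.2.1.1 x, rootOf_reaches F x⟩
  · intro p _
    rfl

theorem forestWeight_pos {F : K → K} (h : IsSpForest k F) : 0 < forestWeight k F :=
  Finset.prod_pos fun v hv => h.2 v (Finset.mem_filter.1 hv).2

theorem treeWt_nonneg (y : K) : 0 ≤ treeWt k y :=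
  Finset.sum_nonneg fun T hT => (forestWeight_pos (Finset.mem_filter.1 hT).2.1).le

theorem exists_tree (hirr : StronglyConnected k) (y : K) : ∃ T : K → K, IsSpTree k T y := by
  classical
  have hreach : ∀ v : K, ∃ n : ℕ, ∃ g : ℕ → K,
      g 0 = v ∧ g n = y ∧ ∀ i, i < n → 0 < k (g i) (g (i + 1)) := by
    intro v
    have h := hirr v y
    induction h using Relation.ReflTransGen.head_induction_on with
    | refl => exact ⟨0, fun _ => y, rfl, rfl, fun i hi => absurd hi (Nat.not_lt_zero i)⟩
    | @head a c hac hcy ih =>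
      obtain ⟨n, g, hg0, hgn, harc⟩ := ih
      refine ⟨n + 1, fun i => if i = 0 then a else g (i - 1), if_pos rfl, ?_, ?_⟩
      · show (if n + 1 = 0 then a else g (n + 1 - 1)) = y
        rw [if_neg (Nat.succ_ne_zero n), Nat.add_sub_cancel]
        exact hgn
      · intro i hi
        show 0 < k (if i = 0 then a else g (i - 1)) (if i + 1 = 0 then a else g (i + 1 - 1))
        rw [if_neg (Nat.succ_ne_zero i), Nat.add_sub_cancel]
        by_cases hi0 : i = 0
        · subst hi0
          rw [if_pos rfl, hg0]
          exact hac
        · rw [if_neg hi0]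
          have h1 : i - 1 + 1 = i := Nat.sub_add_cancel (Nat.one_le_iff_ne_zero.2 hi0)
          have h2 := harc (i - 1) (by omega)
          rwa [h1] at h2
  set d : K → ℕ := fun v => Nat.find (hreach v) with hd
  have hdspec : ∀ v, ∃ g : ℕ → K, g 0 = v ∧ g (d v) = y ∧
      ∀ i, i < d v → 0 < k (g i) (g (i + 1)) := fun v => Nat.find_spec (hreach v)
  have hd0 : ∀ v, d v = 0 → v = y := by
    intro v h0
    obtain ⟨g, hg0, hgn, -⟩ := hdspec v
    rw [h0] at hgn
    rw [← hg0]
    exact hgn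
  have hstep : ∀ v, v ≠ y → ∃ w, 0 < k v w ∧ d w < d v := by
    intro v hv
    obtain ⟨g, hg0, hgn, harc⟩ := hdspec v
    have hdpos : 0 < d v := Nat.pos_of_ne_zero fun h => hv (hd0 v h)
    refine ⟨g 1, ?_, ?_⟩
    · have h1 := harc 0 hdpos
      rwa [hg0] at h1
    · have hR : ∃ g' : ℕ → K, g' 0 = g 1 ∧ g' (d v - 1) = y ∧
          ∀ i, i < d v - 1 → 0 < k (g' i) (g' (i + 1)) := by
        refine ⟨fun i => g (i + 1), rfl, ?_, ?_⟩
        · show g (d v - 1 + 1) = y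
          rw [Nat.sub_add_cancel hdpos]
          exact hgn
        · intro i hi
          exact harc (i + 1) (by omega)
      calc d (g 1) ≤ d v - 1 := Nat.find_le hR
        _ < d v := Nat.sub_lt hdpos one_pos
  have hT : ∀ v : K, ∃ w : K, (v = y ∧ w = y) ∨ (v ≠ y ∧ 0 < k v w ∧ d w < d v) := by
    intro v
    by_cases hv : v = y
    · exact ⟨y, Or.inl ⟨hv, rfl⟩⟩
    · obtain ⟨w, h1, h2⟩ := hstep v hv
      exact ⟨w, Or.inr ⟨hv, h1, h2⟩⟩
  choose T hTspec using hT
  have hTy : T y = y := by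
    rcases hTspec y with ⟨-, h⟩ | ⟨h, -⟩
    · exact h
    · exact absurd rfl h
  have hTarc : ∀ v, v ≠ y → 0 < k v (T v) ∧ d (T v) < d v := by
    intro v hv
    rcases hTspec v with ⟨h, -⟩ | ⟨-, h1, h2⟩
    · exact absurd h hv
    · exact ⟨h1, h2⟩
  have hreachy : ∀ n : ℕ, ∀ v, d v ≤ n → Reaches T v y := by
    intro n
    induction n with
    | zero =>
      intro v hv
      have h := hd0 v (Nat.le_zero.1 hv)
      subst h
      exact reaches_rfl T v
    | succ n ih =>
      intro v hv
      by_cases hvy : v = y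
      · subst hvy
        exact reaches_rfl T v
      · have h2 := (hTarc v hvy).2
        obtain ⟨m, hm⟩ := ih (T v) (by omega)
        exact ⟨m + 1, by rw [Function.iterate_succ_apply]; exact hm⟩
  refine ⟨T, ⟨?_, ?_⟩, ?_⟩
  · apply settles_of_roots
    intro v
    exact ⟨y, hTy, hreachy (d v) v le_rfl⟩
  · intro v hv
    by_cases hvy : v = y
    · subst hvy
      exact absurd hTy hv
    · exact (hTarc v hvy).1
  · ext v
    simp only [Finset.mem_filter, Finset.mem_univ, true_and, Finset.mem_singleton]
    constructor
    · intro h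
      by_contra hvy
      have h2 := (hTarc v hvy).2
      rw [h] at h2
      exact lt_irrefl _ h2
    · intro h
      subst h
      exact hTy

theorem treeWtTotal_pos [Nonempty K] (hirr : StronglyConnected k) :
    0 < treeWtTotal k := by
  classical
  obtain ⟨y⟩ := (inferInstance : Nonempty K)
  obtain ⟨T, hT⟩ := exists_tree hirr y
  rw [treeWtTotal]
  apply Finset.sum_pos'
  · intro r _
    exact treeWt_nonneg r
  · refine ⟨y, Finset.mem_univ y, ?_⟩
    rw [treeWt]
    apply Finset.sum_pos'
    · intro F hF
      exact (forestWeight_pos (Finset.mem_filter.1 hF).2.1).le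
    · exact ⟨T, Finset.mem_filter.2 ⟨Finset.mem_univ T, hT⟩, forestWeight_pos hT.1⟩

end Key

end ForestAux

/-- Graphical representation of the group inverse of the backward generator:
`L^#_{x,y} = -w(ℱ^{x→y})/W + ρˢ(y) w(ℱ)/W`. -/
theorem group_inverse_graphical_representation
    {K : Type*} [Fintype K] [DecidableEq K] [Nontrivial K]
    (k : K → K → ℝ) (hk : ∀ x y : K, x ≠ y → 0 ≤ k x y)
    (hirr : StronglyConnected k)
    (ρ : K → ℝ) (hρpos : ∀ x, 0 < ρ x) (hρsum : ∑ x, ρ x = 1)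
    (hρstat : Matrix.vecMul ρ (gen k) = 0)
    (X : Matrix K K ℝ)
    (hX1 : gen k * X * gen k = gen k)
    (hX2 : X * gen k * X = X)
    (hX3 : gen k * X = X * gen k) :
    ∀ x y : K, X x y = -(wTo k x y) / treeWtTotal k +
      ρ y * (wTwoTotal k / treeWtTotal k) := by
  classical
  have hW : 0 < treeWtTotal k := ForestAux.treeWtTotal_pos hirr
  set W := treeWtTotal k with hWdef
  have hWne : W ≠ 0 := ne_of_gt hW
  have hrow : ∀ a : K, ∑ z, gen k a z = 0 := by
    intro a
    rw [← Finset.add_sum_erase _ (fun z => gen k a z) (Finset.mem_univ a),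
      ForestAux.gen_diag]
    have h1 : ∑ z ∈ Finset.univ.erase a, gen k a z = ∑ z ∈ Finset.univ.erase a, k a z :=
      Finset.sum_congr rfl fun z hz =>
        ForestAux.gen_off k (Ne.symm (Finset.mem_erase.1 hz).1)
    rw [h1]
    ring
  have hstat : ∀ z : K, ∑ a, ρ a * gen k a z = 0 := by
    intro z
    have h1 := congrFun hρstat z
    simpa [Matrix.vecMul, dotProduct] using h1
  have hkirch : ∀ b : K, ρ b * W = treeWt k b := by
    intro b
    have h1 : ∑ a, ρ a * ∑ z, gen k a z * wTo k z b
        = ∑ z, (∑ a, ρ a * gen k a z) * wTo k z b := by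
      calc ∑ a, ρ a * ∑ z, gen k a z * wTo k z b
          = ∑ a, ∑ z, ρ a * (gen k a z * wTo k z b) :=
            Finset.sum_congr rfl fun a _ => Finset.mul_sum _ _ _
        _ = ∑ z, ∑ a, ρ a * (gen k a z * wTo k z b) := Finset.sum_comm
        _ = ∑ z, (∑ a, ρ a * gen k a z) * wTo k z b :=
            Finset.sum_congr rfl fun z _ => by
              rw [Finset.sum_mul]
              exact Finset.sum_congr rfl fun a _ => (mul_assoc _ _ _).symm
    have h3 : ∑ z, (∑ a, ρ a * gen k a z) * wTo k z b = 0 :=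
      Finset.sum_eq_zero fun z _ => by rw [hstat z, zero_mul]
    have h2 : ∑ a, ρ a * ∑ z, gen k a z * wTo k z b
        = ∑ a, ρ a * (treeWt k b - (if a = b then W else 0)) :=
      Finset.sum_congr rfl fun a _ => by rw [ForestAux.keyA hk a b]
    have h4 : ∑ a, ρ a * (treeWt k b - (if a = b then W else 0))
        = treeWt k b - ρ b * W := by
      have h5 : ∀ a, ρ a * (treeWt k b - (if a = b then W else 0))
          = ρ a * treeWt k b - (if a = b then ρ a * W else 0) := by
        intro a
        by_cases h : a = b
        · simp only [if_pos h]; ring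
        · simp only [if_neg h]; ring
      rw [Finset.sum_congr rfl fun a _ => h5 a, Finset.sum_sub_distrib, ← Finset.sum_mul,
        hρsum, one_mul, Finset.sum_ite_eq' Finset.univ b (fun a => ρ a * W)]
      simp
    have h6 : (0 : ℝ) = treeWt k b - ρ b * W := by
      rw [← h3, ← h1, h2, h4]
    linarith
  set M : Matrix K K ℝ := Matrix.of
    (fun a b => -(wTo k a b) / W + ρ b * (wTwoTotal k / W)) with hM
  set Pi : Matrix K K ℝ := Matrix.of (fun _ b => ρ b) with hPi
  have key1 : ∀ a b : K, ∑ z, gen k a z * M z b = (if a = b then 1 else 0) - ρ b := by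
    intro a b
    have e1 : ∑ z, gen k a z * M z b
        = (∑ z, gen k a z * wTo k z b) * (-1 / W)
          + (∑ z, gen k a z) * (ρ b * (wTwoTotal k / W)) := by
      rw [Finset.sum_mul, Finset.sum_mul, ← Finset.sum_add_distrib]
      refine Finset.sum_congr rfl fun z _ => ?_
      show gen k a z * (-(wTo k z b) / W + ρ b * (wTwoTotal k / W)) = _
      ring
    rw [e1, ForestAux.keyA hk a b, hrow a, zero_mul, add_zero, ← hkirch b, ← hWdef]
    by_cases hab : a = b
    · rw [if_pos hab, if_pos hab]
      field_simp
      ring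
    · rw [if_neg hab, if_neg hab]
      field_simp
      ring
  have key2 : ∀ a b : K, ∑ z, M a z * gen k z b = (if a = b then 1 else 0) - ρ b := by
    intro a b
    have e1 : ∑ z, M a z * gen k z b
        = (∑ z, wTo k a z * gen k z b) * (-1 / W)
          + (∑ z, ρ z * gen k z b) * (wTwoTotal k / W) := by
      rw [Finset.sum_mul, Finset.sum_mul, ← Finset.sum_add_distrib]
      refine Finset.sum_congr rfl fun z _ => ?_
      show (-(wTo k a z) / W + ρ z * (wTwoTotal k / W)) * gen k z b = _
      ring
    rw [e1, ForestAux.keyB hk a b, hstat b, zero_mul, add_zero, ← hkirch b, ← hWdef]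
    by_cases hab : a = b
    · rw [if_pos hab, if_pos hab]
      field_simp
      ring
    · rw [if_neg hab, if_neg hab]
      field_simp
      ring
  have key3 : ∀ a : K, ∑ z, M a z = 0 := by
    intro a
    have e1 : ∑ z, M a z
        = (∑ z, wTo k a z) * (-1 / W) + (∑ z, ρ z) * (wTwoTotal k / W) := by
      rw [Finset.sum_mul, Finset.sum_mul, ← Finset.sum_add_distrib]
      refine Finset.sum_congr rfl fun z _ => ?_
      show -(wTo k a z) / W + ρ z * (wTwoTotal k / W) = _
      ring
    rw [e1, ForestAux.keyC a, hρsum, one_mul]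
    field_simp
    ring
  have hLM : gen k * M = 1 - Pi := by
    ext a b
    rw [Matrix.mul_apply, Matrix.sub_apply, Matrix.one_apply]
    exact key1 a b
  have hML : M * gen k = 1 - Pi := by
    ext a b
    rw [Matrix.mul_apply, Matrix.sub_apply, Matrix.one_apply]
    exact key2 a b
  have hMPi : M * Pi = 0 := by
    ext a b
    rw [Matrix.mul_apply, Matrix.zero_apply]
    have h1 : ∀ z : K, M a z * Pi z b = M a z * ρ b := fun z => rfl
    rw [Finset.sum_congr rfl fun z _ => h1 z, ← Finset.sum_mul, key3 a, zero_mul]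
  have hPiL : Pi * gen k = 0 := by
    ext a b
    rw [Matrix.mul_apply, Matrix.zero_apply]
    exact hstat b
  have hLML : gen k * M * gen k = gen k := by
    rw [hLM, Matrix.sub_mul, Matrix.one_mul, hPiL, sub_zero]
  have hMLM : M * (gen k * M) = M := by
    rw [hLM, Matrix.mul_sub, Matrix.mul_one, hMPi, sub_zero]
  have h1 : gen k * M = (gen k * X) * (gen k * M) := by
    calc gen k * M = ((gen k * X) * gen k) * M := by rw [hX1]
      _ = (gen k * X) * (gen k * M) := by rw [Matrix.mul_assoc]
  have h2 : gen k * X = (gen k * X) * (gen k * M) := by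
    calc gen k * X = X * gen k := hX3
      _ = X * ((gen k * M) * gen k) := by rw [hLML]
      _ = (X * gen k) * (M * gen k) := by
          rw [Matrix.mul_assoc, Matrix.mul_assoc]
      _ = (gen k * X) * (M * gen k) := by rw [← hX3]
      _ = (gen k * X) * (gen k * M) := by rw [hML, ← hLM]
  have hEF : gen k * X = gen k * M := h2.trans h1.symm
  have hXE : X * (gen k * X) = X := by
    rw [← Matrix.mul_assoc]
    exact hX2
  have hfinal : X = M := by
    calc X = X * (gen k * X) := hXE.symm
      _ = X * (gen k * M) := by rw [hEF]
      _ = (X * gen k) * M := by rw [Matrix.mul_assoc]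
      _ = (gen k * X) * M := by rw [← hX3]
      _ = (gen k * M) * M := by rw [hEF]
      _ = (M * gen k) * M := by rw [hLM, ← hML]
      _ = M * (gen k * M) := by rw [Matrix.mul_assoc]
      _ = M := hMLM
  intro x y
  rw [hfinal]
  rfl
end
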